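/- arXiv:0812.1968 — 4 statements merged into one kernel-verified Lean document; each statement's English description precedes it below -/
import Mathlib

section
/- Let G be a countable group, H a Hilbert space, and {u_g : g ∈ G} a bounded family in H. Let Φ be a left Følner sequence in G. If lim_{n→∞} (1/|Φ_n|²) · (limsup_{m→∞} (1/|Φ_m|) Σ_{g ∈ Φ_m} Σ_{h,k ∈ Φ_n} ⟨u_{hg}, u_{kg}⟩) = 0, then lim_{n→∞} ‖(1/|Φ_n|) Σ_{g ∈ Φ_n} u_g‖ = 0. -/
open MeasureTheory Filter

/-- `Φ` is a left Følner sequence in `Γ`: a sequence of nonempty finite subsets with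
`|Φₙ ∩ γΦₙ|/|Φₙ| → 1` for every `γ`. -/
def IsLeftFolner {Γ : Type*} [Group Γ] [DecidableEq Γ] (Φ : ℕ → Finset Γ) : Prop :=
  (∀ n, (Φ n).Nonempty) ∧
    ∀ γ : Γ, Filter.Tendsto
      (fun n => ((Φ n ∩ (Φ n).image (γ * ·)).card : ℝ) / ((Φ n).card : ℝ))
      Filter.atTop (nhds 1)

/-- `Φ` is a two-sided Følner sequence: a left Følner sequence with additionally
`|Φₙ ∩ Φₙγ|/|Φₙ| → 1` for every `γ`. -/
def IsTwoSidedFolner {Γ : Type*} [Group Γ] [DecidableEq Γ] (Φ : ℕ → Finset Γ) : Prop :=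
  IsLeftFolner Φ ∧
    ∀ γ : Γ, Filter.Tendsto
      (fun n => ((Φ n ∩ (Φ n).image (· * γ)).card : ℝ) / ((Φ n).card : ℝ))
      Filter.atTop (nhds 1)

private lemma norm_sq_sum_le' {ι H : Type*} [NormedAddCommGroup H]
    (s : Finset ι) (w : ι → H) :
    ‖∑ i ∈ s, w i‖ ^ 2 ≤ (s.card : ℝ) * ∑ i ∈ s, ‖w i‖ ^ 2 := by
  calc ‖∑ i ∈ s, w i‖ ^ 2 ≤ (∑ i ∈ s, ‖w i‖) ^ 2 := by
        gcongr
        exact norm_sum_le _ _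
    _ ≤ _ := sq_sum_le_card_mul_sum_sq

private lemma norm_sq_sum_eq' {ι H : Type*} [NormedAddCommGroup H] [InnerProductSpace ℂ H]
    (s : Finset ι) (w : ι → H) :
    ‖∑ i ∈ s, w i‖ ^ 2 = ∑ h ∈ s, ∑ k ∈ s, (inner ℂ (w h) (w k) : ℂ).re := by
  rw [← inner_self_eq_norm_sq (𝕜 := ℂ)]
  rw [sum_inner]
  simp [inner_sum]

private lemma folner_step {G H : Type*} [Group G] [DecidableEq G]
    [NormedAddCommGroup H] [NormedSpace ℝ H]
    (u : G → H) {C : ℝ} (hC : ∀ g, ‖u g‖ ≤ C)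
    (Φ : ℕ → Finset G) (hΦ : IsLeftFolner Φ) (h : G) :
    Filter.Tendsto (fun m => ‖(1 / ((Φ m).card : ℝ)) • ∑ g ∈ Φ m, u g
      - (1 / ((Φ m).card : ℝ)) • ∑ g ∈ Φ m, u (h * g)‖) atTop (nhds 0) := by
  have hC0 : 0 ≤ C := le_trans (norm_nonneg (u 1)) (hC 1)
  have hcard : ∀ m, (0:ℝ) < ((Φ m).card : ℝ) := fun m => by
    exact_mod_cast (hΦ.1 m).card_pos
  have key : ∀ m, ‖(1 / ((Φ m).card : ℝ)) • ∑ g ∈ Φ m, u g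
      - (1 / ((Φ m).card : ℝ)) • ∑ g ∈ Φ m, u (h * g)‖
      ≤ 2 * C * (1 - ((Φ m ∩ (Φ m).image (h * ·)).card : ℝ) / ((Φ m).card : ℝ)) := by
    intro m
    set B := Φ m with hB
    set A := B.image (h * ·) with hA
    have hinj : Function.Injective (h * ·) := fun a b hab => by simpa using hab
    have himg : ∑ g ∈ B, u (h * g) = ∑ a ∈ A, u a := by
      rw [hA, Finset.sum_image (fun x _ y _ hxy => hinj hxy)]
    rw [← smul_sub, norm_smul, himg]
    have hsplit : ∑ g ∈ B, u g - ∑ a ∈ A, u a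
        = ∑ g ∈ B \ A, u g - ∑ g ∈ A \ B, u g := (Finset.sum_sdiff_sub_sum_sdiff ..).symm
    have hcardBA : ((B \ A).card : ℝ) = (B.card : ℝ) - ((B ∩ A).card : ℝ) := by
      have := Finset.card_sdiff_add_card_inter B A
      push_cast [← this]; ring
    have hcardAB : ((A \ B).card : ℝ) = (B.card : ℝ) - ((B ∩ A).card : ℝ) := by
      have h1 := Finset.card_sdiff_add_card_inter A B
      have h2 : A.card = B.card := Finset.card_image_of_injective _ hinj
      have h3 : (A ∩ B).card = (B ∩ A).card := by rw [Finset.inter_comm]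
      rw [h3, h2] at h1
      push_cast [← h1]; ring
    have hnorm : ‖∑ g ∈ B, u g - ∑ a ∈ A, u a‖
        ≤ 2 * C * ((B.card : ℝ) - ((B ∩ A).card : ℝ)) := by
      rw [hsplit]
      calc ‖∑ g ∈ B \ A, u g - ∑ g ∈ A \ B, u g‖
          ≤ ‖∑ g ∈ B \ A, u g‖ + ‖∑ g ∈ A \ B, u g‖ := norm_sub_le _ _
        _ ≤ ((B \ A).card : ℝ) * C + ((A \ B).card : ℝ) * C := by
            gcongr <;>
              refine (norm_sum_le _ _).trans ?_ <;>
              · refine le_trans (Finset.sum_le_sum fun i _ => hC i) ?_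
                simp [Finset.sum_const, nsmul_eq_mul, le_refl]
        _ = 2 * C * ((B.card : ℝ) - ((B ∩ A).card : ℝ)) := by
            rw [hcardBA, hcardAB]; ring
    calc |1 / ((Φ m).card : ℝ)| * ‖∑ g ∈ B, u g - ∑ a ∈ A, u a‖
        ≤ (1 / ((Φ m).card : ℝ)) * (2 * C * ((B.card : ℝ) - ((B ∩ A).card : ℝ))) := by
          rw [abs_of_pos (by have := hcard m; positivity)]
          gcongr
      _ = 2 * C * (1 - ((B ∩ A).card : ℝ) / ((Φ m).card : ℝ)) := by
          have hc := (hcard m).ne'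
          rw [hB]
          field_simp
  have hlim : Filter.Tendsto
      (fun m => 2 * C * (1 - ((Φ m ∩ (Φ m).image (h * ·)).card : ℝ) / ((Φ m).card : ℝ)))
      atTop (nhds 0) := by
    have h2 : Filter.Tendsto
        (fun m => 1 - ((Φ m ∩ (Φ m).image (h * ·)).card : ℝ) / ((Φ m).card : ℝ))
        atTop (nhds 0) := by
      simpa using (tendsto_const_nhds (x := (1:ℝ))).sub (hΦ.2 h)
    simpa using h2.const_mul (2 * C)
  exact squeeze_zero (fun m => norm_nonneg _) key hlim

/-- van der Corput lemma, Lemma 4.1. If `{u_g}` is a bounded family in a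
Hilbert space and `Φ` a left Følner sequence with
`(1/|Φₙ|²)·limsup_m (1/|Φₘ|) Σ_{g∈Φₘ} Σ_{h,k∈Φₙ} ⟨u_{hg}, u_{kg}⟩ → 0`
(the inner double sum being real, we take real parts), then
`‖(1/|Φₙ|) Σ_{g∈Φₙ} u_g‖ → 0`. -/
theorem van_der_Corput
    {G : Type*} [Group G] [Countable G] [DecidableEq G]
    {H : Type*} [NormedAddCommGroup H] [InnerProductSpace ℂ H] [CompleteSpace H]
    (u : G → H) (hu : ∃ C : ℝ, ∀ g, ‖u g‖ ≤ C)
    (Φ : ℕ → Finset G) (hΦ : IsLeftFolner Φ)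
    (hvdc : Tendsto (fun n =>
        (1 / ((Φ n).card : ℝ) ^ 2) *
          Filter.limsup (fun m =>
            (1 / ((Φ m).card : ℝ)) *
              ∑ g ∈ Φ m, ∑ h ∈ Φ n, ∑ k ∈ Φ n,
                (inner ℂ (u (h * g)) (u (k * g)) : ℂ).re) Filter.atTop)
      atTop (nhds 0)) :
    Tendsto (fun n => ‖(1 / ((Φ n).card : ℝ)) • ∑ g ∈ Φ n, u g‖) atTop (nhds 0) := by
  obtain ⟨C0, hC0⟩ := hu
  have hC : ∀ g, ‖u g‖ ≤ max C0 0 := fun g => (hC0 g).trans (le_max_left _ _)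
  set C := max C0 0 with hCdef
  have hCnn : 0 ≤ C := le_max_right _ _
  have hcard : ∀ m, (0:ℝ) < ((Φ m).card : ℝ) := fun m => by
    exact_mod_cast (hΦ.1 m).card_pos
  -- Abbreviations
  set S : ℕ → H := fun m => (1 / ((Φ m).card : ℝ)) • ∑ g ∈ Φ m, u g with hSdef
  set V : ℕ → ℕ → H := fun n m =>
    (1 / ((Φ m).card : ℝ)) • ∑ g ∈ Φ m, (1 / ((Φ n).card : ℝ)) • ∑ h ∈ Φ n, u (h * g)
    with hVdef
  set A : ℕ → ℕ → ℝ := fun n m =>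
    (1 / ((Φ m).card : ℝ)) * ∑ g ∈ Φ m, ∑ h ∈ Φ n, ∑ k ∈ Φ n,
      (inner ℂ (u (h * g)) (u (k * g)) : ℂ).re with hAdef
  -- Claim 2 : pointwise Cauchy–Schwarz bound
  have claim2 : ∀ n m, ‖V n m‖ ^ 2 ≤ (1 / ((Φ n).card : ℝ) ^ 2) * A n m := by
    intro n m
    have h3 : ∀ g : G, ‖(1 / ((Φ n).card : ℝ)) • ∑ h ∈ Φ n, u (h * g)‖ ^ 2
        = (1 / ((Φ n).card : ℝ) ^ 2) * ∑ h ∈ Φ n, ∑ k ∈ Φ n,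
            (inner ℂ (u (h * g)) (u (k * g)) : ℂ).re := by
      intro g
      rw [norm_smul, Real.norm_eq_abs, mul_pow, sq_abs, norm_sq_sum_eq']
      rw [div_pow, one_pow]
    have h1 : ‖V n m‖ ^ 2
        = (1 / ((Φ m).card : ℝ)) ^ 2
          * ‖∑ g ∈ Φ m, (1 / ((Φ n).card : ℝ)) • ∑ h ∈ Φ n, u (h * g)‖ ^ 2 := by
      rw [hVdef]
      rw [norm_smul, Real.norm_eq_abs, mul_pow, sq_abs]
    have h2 := norm_sq_sum_le' (Φ m) (fun g => (1 / ((Φ n).card : ℝ)) • ∑ h ∈ Φ n, u (h * g))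
    calc ‖V n m‖ ^ 2
        = (1 / ((Φ m).card : ℝ)) ^ 2
          * ‖∑ g ∈ Φ m, (1 / ((Φ n).card : ℝ)) • ∑ h ∈ Φ n, u (h * g)‖ ^ 2 := h1
      _ ≤ (1 / ((Φ m).card : ℝ)) ^ 2 * (((Φ m).card : ℝ)
          * ∑ g ∈ Φ m, ‖(1 / ((Φ n).card : ℝ)) • ∑ h ∈ Φ n, u (h * g)‖ ^ 2) := by
          exact mul_le_mul_of_nonneg_left h2 (by positivity)
      _ = (1 / ((Φ n).card : ℝ) ^ 2) * A n m := by
          simp only [h3, hAdef]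
          rw [← Finset.mul_sum]
          have hkey : (1 / ((Φ m).card : ℝ)) ^ 2 * ((Φ m).card : ℝ)
              = 1 / ((Φ m).card : ℝ) := by
            have hc := (hcard m).ne'
            rw [one_div, sq, mul_assoc, inv_mul_cancel₀ hc, mul_one]
          rw [← mul_assoc, hkey]
          ring
  -- Claim 3 : boundedness of A n
  have claim3 : ∀ n, IsBoundedUnder (· ≤ ·) atTop (A n) := by
    intro n
    refine isBoundedUnder_of ⟨((Φ n).card : ℝ) ^ 2 * C ^ 2, fun m => ?_⟩
    have hterm : ∀ (h k g : G), (inner ℂ (u (h * g)) (u (k * g)) : ℂ).re ≤ C ^ 2 := by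
      intro h k g
      calc (inner ℂ (u (h * g)) (u (k * g)) : ℂ).re
          ≤ ‖(inner ℂ (u (h * g)) (u (k * g)) : ℂ)‖ := Complex.re_le_norm _
        _ ≤ ‖u (h * g)‖ * ‖u (k * g)‖ := norm_inner_le_norm _ _
        _ ≤ C * C := mul_le_mul (hC _) (hC _) (norm_nonneg _) hCnn
        _ = C ^ 2 := (sq C).symm
    have hsum : ∑ g ∈ Φ m, ∑ h ∈ Φ n, ∑ k ∈ Φ n,
        (inner ℂ (u (h * g)) (u (k * g)) : ℂ).re
        ≤ ((Φ m).card : ℝ) * (((Φ n).card : ℝ) ^ 2 * C ^ 2) := by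
      calc ∑ g ∈ Φ m, ∑ h ∈ Φ n, ∑ k ∈ Φ n, (inner ℂ (u (h * g)) (u (k * g)) : ℂ).re
          ≤ ∑ _g ∈ Φ m, ∑ _h ∈ Φ n, ∑ _k ∈ Φ n, C ^ 2 := by
            refine Finset.sum_le_sum fun g _ => ?_
            refine Finset.sum_le_sum fun h _ => ?_
            exact Finset.sum_le_sum fun k _ => hterm h k g
        _ = ((Φ m).card : ℝ) * (((Φ n).card : ℝ) ^ 2 * C ^ 2) := by
            simp only [Finset.sum_const, nsmul_eq_mul]
            ring
    rw [hAdef]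
    calc (1 / ((Φ m).card : ℝ)) * ∑ g ∈ Φ m, ∑ h ∈ Φ n, ∑ k ∈ Φ n,
          (inner ℂ (u (h * g)) (u (k * g)) : ℂ).re
        ≤ (1 / ((Φ m).card : ℝ)) * (((Φ m).card : ℝ) * (((Φ n).card : ℝ) ^ 2 * C ^ 2)) := by
          exact mul_le_mul_of_nonneg_left hsum (by positivity)
      _ = ((Φ n).card : ℝ) ^ 2 * C ^ 2 := by
          have hc := (hcard m).ne'
          field_simp
  -- Claim 1 : for each n, ‖S m - V n m‖ → 0 as m → ∞
  have claim1 : ∀ n, Tendsto (fun m => ‖S m - V n m‖) atTop (nhds 0) := by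
    intro n
    have hid : ∀ m, S m - V n m
        = (1 / ((Φ n).card : ℝ)) • ∑ h ∈ Φ n,
            (S m - (1 / ((Φ m).card : ℝ)) • ∑ g ∈ Φ m, u (h * g)) := by
      intro m
      rw [Finset.sum_sub_distrib]
      rw [smul_sub]
      congr 1
      · rw [Finset.sum_const, ← Nat.cast_smul_eq_nsmul ℝ, smul_smul]
        have hc := (hcard n).ne'
        rw [one_div, inv_mul_cancel₀ hc, one_smul]
      · show (1 / ((Φ m).card : ℝ)) • ∑ g ∈ Φ m, (1 / ((Φ n).card : ℝ)) • ∑ h ∈ Φ n, u (h * g)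
            = (1 / ((Φ n).card : ℝ)) • ∑ x ∈ Φ n, (1 / ((Φ m).card : ℝ)) • ∑ g ∈ Φ m, u (x * g)
        rw [← Finset.smul_sum, ← Finset.smul_sum,
          smul_comm (1 / ((Φ m).card : ℝ)) (1 / ((Φ n).card : ℝ)), Finset.sum_comm]
    have hbound : ∀ m, ‖S m - V n m‖
        ≤ (1 / ((Φ n).card : ℝ)) * ∑ h ∈ Φ n,
            ‖S m - (1 / ((Φ m).card : ℝ)) • ∑ g ∈ Φ m, u (h * g)‖ := by
      intro m
      rw [hid m, norm_smul, Real.norm_eq_abs, abs_of_pos (by have := hcard n; positivity)]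
      exact mul_le_mul_of_nonneg_left (norm_sum_le _ _) (by positivity)
    have hlim : Tendsto (fun m => (1 / ((Φ n).card : ℝ)) * ∑ h ∈ Φ n,
        ‖S m - (1 / ((Φ m).card : ℝ)) • ∑ g ∈ Φ m, u (h * g)‖) atTop (nhds 0) := by
      have hsum : Tendsto (fun m => ∑ h ∈ Φ n,
          ‖S m - (1 / ((Φ m).card : ℝ)) • ∑ g ∈ Φ m, u (h * g)‖) atTop (nhds 0) := by
        have hsum0 := tendsto_finset_sum (Φ n) (fun h _ => folner_step u hC Φ hΦ h)
        rw [Finset.sum_const, smul_zero] at hsum0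
        exact hsum0
      have := hsum.const_mul (1 / ((Φ n).card : ℝ))
      rw [mul_zero] at this
      exact this
    exact squeeze_zero (fun m => norm_nonneg _) hbound hlim
  -- Conclusion
  have hS0 : Tendsto S atTop (nhds 0) := by
    rw [NormedAddCommGroup.tendsto_nhds_zero]
    intro ε hε
    have hε2 : (0:ℝ) < ε / 2 := by linarith
    have h1 : ∀ᶠ n in atTop,
        (1 / ((Φ n).card : ℝ) ^ 2) *
          Filter.limsup (fun m =>
            (1 / ((Φ m).card : ℝ)) *
              ∑ g ∈ Φ m, ∑ h ∈ Φ n, ∑ k ∈ Φ n,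
                (inner ℂ (u (h * g)) (u (k * g)) : ℂ).re) Filter.atTop < (ε / 2) ^ 2 :=
      hvdc.eventually_lt_const (by positivity)
    obtain ⟨n, hn⟩ := h1.exists
    have hlimA : Filter.limsup (A n) atTop < (ε / 2) ^ 2 * ((Φ n).card : ℝ) ^ 2 := by
      have hNn : (0:ℝ) < ((Φ n).card : ℝ) ^ 2 := by have := hcard n; positivity
      have : Filter.limsup (A n) atTop
          = ((Φ n).card : ℝ) ^ 2 *
            ((1 / ((Φ n).card : ℝ) ^ 2) * Filter.limsup (A n) atTop) := by
        rw [← mul_assoc, mul_one_div_cancel hNn.ne', one_mul]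
      rw [this]
      calc ((Φ n).card : ℝ) ^ 2 *
            ((1 / ((Φ n).card : ℝ) ^ 2) * Filter.limsup (A n) atTop)
          < ((Φ n).card : ℝ) ^ 2 * (ε / 2) ^ 2 := by
            refine mul_lt_mul_of_pos_left ?_ hNn
            exact hn
        _ = (ε / 2) ^ 2 * ((Φ n).card : ℝ) ^ 2 := by ring
    have hev1 : ∀ᶠ m in atTop, A n m < (ε / 2) ^ 2 * ((Φ n).card : ℝ) ^ 2 :=
      eventually_lt_of_limsup_lt hlimA (claim3 n)
    have hev2 : ∀ᶠ m in atTop, ‖S m - V n m‖ < ε / 2 :=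
      (claim1 n).eventually_lt_const hε2
    filter_upwards [hev1, hev2] with m hm1 hm2
    have hVm : ‖V n m‖ < ε / 2 := by
      have hsq : ‖V n m‖ ^ 2 < (ε / 2) ^ 2 := by
        calc ‖V n m‖ ^ 2 ≤ (1 / ((Φ n).card : ℝ) ^ 2) * A n m := claim2 n m
          _ < (1 / ((Φ n).card : ℝ) ^ 2) * ((ε / 2) ^ 2 * ((Φ n).card : ℝ) ^ 2) := by
              refine mul_lt_mul_of_pos_left hm1 ?_
              have := hcard n; positivity
          _ = (ε / 2) ^ 2 := by
              have hc := (hcard n).ne'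
              field_simp
      exact lt_of_pow_lt_pow_left₀ 2 (le_of_lt hε2) hsq
    calc ‖S m‖ = ‖(S m - V n m) + V n m‖ := by rw [sub_add_cancel]
      _ ≤ ‖S m - V n m‖ + ‖V n m‖ := norm_add_le _ _
      _ < ε / 2 + ε / 2 := add_lt_add hm2 hVm
      _ = ε := by ring
  exact tendsto_zero_iff_norm_tendsto_zero.mp hS0
end

section
/- Let G be a countable group, H a Hilbert space, and {u_{g,h} : g, h ∈ G} a bounded family in H. Let Φ, Ψ be two-sided Følner sequences in G. If lim_{n→∞} (1/(|Φ_n|²|Ψ_n|²)) · (limsup_{m→∞} (1/(|Φ_m||Ψ_m|)) Σ_{j,j' ∈ Φ_n} Σ_{k,k' ∈ Ψ_n} Σ_{g ∈ Φ_m} Σ_{h ∈ Ψ_m} ⟨u_{j'g, k'h}, u_{jg, kh}⟩) = 0, then lim_{n→∞} ‖(1/(|Φ_n||Ψ_n|)) Σ_{(g,h) ∈ Φ_n × Ψ_n} u_{g,h}‖ = 0. -/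
open MeasureTheory Filter

private lemma sum_two_sets_diff_norm {G : Type*} [DecidableEq G]
    {H : Type*} [NormedAddCommGroup H]
    (S S' : Finset G) (F : G → H) {D : ℝ} (hF : ∀ g, ‖F g‖ ≤ D)
    (hcard : S'.card = S.card) :
    ‖(∑ g ∈ S, F g) - ∑ g ∈ S', F g‖ ≤ 2 * ((S.card : ℝ) - ((S ∩ S').card : ℝ)) * D := by
  have h1 : ((S \ S').card : ℝ) = (S.card : ℝ) - ((S ∩ S').card : ℝ) := by
    have := Finset.card_sdiff_add_card_inter S S'
    have := congrArg (fun x : ℕ => (x : ℝ)) this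
    push_cast at this
    linarith
  have h2 : ((S' \ S).card : ℝ) = (S.card : ℝ) - ((S ∩ S').card : ℝ) := by
    have := Finset.card_sdiff_add_card_inter S' S
    have := congrArg (fun x : ℕ => (x : ℝ)) this
    push_cast at this
    rw [Finset.inter_comm] at this
    rw [← hcard]
    linarith
  rw [← Finset.sum_sdiff_sub_sum_sdiff]
  calc ‖(∑ g ∈ S \ S', F g) - ∑ g ∈ S' \ S, F g‖
      ≤ ‖∑ g ∈ S \ S', F g‖ + ‖∑ g ∈ S' \ S, F g‖ := norm_sub_le _ _
    _ ≤ (∑ g ∈ S \ S', ‖F g‖) + ∑ g ∈ S' \ S, ‖F g‖ := by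
        gcongr <;> exact norm_sum_le _ _
    _ ≤ (∑ _g ∈ S \ S', D) + ∑ _g ∈ S' \ S, D := by
        gcongr <;> exact hF _
    _ = ((S \ S').card : ℝ) * D + ((S' \ S).card : ℝ) * D := by
        simp [Finset.sum_const, nsmul_eq_mul]
    _ = 2 * ((S.card : ℝ) - ((S ∩ S').card : ℝ)) * D := by rw [h1, h2]; ring

private lemma vdc_shift_error {G : Type*} [Group G] [DecidableEq G]
    {H : Type*} [NormedAddCommGroup H]
    (u : G → G → H) {C : ℝ} (hC : ∀ g h, ‖u g h‖ ≤ C)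
    (S T : Finset G) (j k : G) :
    ‖(∑ g ∈ S, ∑ h ∈ T, u g h) - ∑ g ∈ S, ∑ h ∈ T, u (j * g) (k * h)‖ ≤
      2 * C * (((S.card : ℝ) - ((S ∩ S.image (j * ·)).card : ℝ)) * (T.card : ℝ)
        + (S.card : ℝ) * ((T.card : ℝ) - ((T ∩ T.image (k * ·)).card : ℝ))) := by
  set S' := S.image (j * ·) with hS'
  set T' := T.image (k * ·) with hT'
  have hinjS : Function.Injective (j * ·) := mul_right_injective j
  have hinjT : Function.Injective (k * ·) := mul_right_injective k
  have hcS : S'.card = S.card := Finset.card_image_of_injective S hinjS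
  have hcT : T'.card = T.card := Finset.card_image_of_injective T hinjT
  have hrw : (∑ g ∈ S, ∑ h ∈ T, u (j * g) (k * h)) = ∑ g ∈ S', ∑ h ∈ T', u g h := by
    rw [Finset.sum_image (fun x _ y _ h => hinjS h)]
    exact Finset.sum_congr rfl fun g _ => by
      rw [Finset.sum_image (fun x _ y _ h => hinjT h)]
  rw [hrw]
  have key : (∑ g ∈ S, ∑ h ∈ T, u g h) - ∑ g ∈ S', ∑ h ∈ T', u g h
      = ((∑ g ∈ S, ∑ h ∈ T, u g h) - ∑ g ∈ S', ∑ h ∈ T, u g h)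
        + ∑ g ∈ S', ((∑ h ∈ T, u g h) - ∑ h ∈ T', u g h) := by
    rw [Finset.sum_sub_distrib]; abel
  rw [key]
  have b1 : ‖(∑ g ∈ S, ∑ h ∈ T, u g h) - ∑ g ∈ S', ∑ h ∈ T, u g h‖ ≤
      2 * ((S.card : ℝ) - ((S ∩ S').card : ℝ)) * ((T.card : ℝ) * C) := by
    refine sum_two_sets_diff_norm S S' _ (fun g => ?_) hcS
    calc ‖∑ h ∈ T, u g h‖ ≤ ∑ h ∈ T, ‖u g h‖ := norm_sum_le _ _
      _ ≤ ∑ _h ∈ T, C := by gcongr; exact hC _ _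
      _ = (T.card : ℝ) * C := by simp [Finset.sum_const, nsmul_eq_mul]
  have b2 : ‖∑ g ∈ S', ((∑ h ∈ T, u g h) - ∑ h ∈ T', u g h)‖ ≤
      (S.card : ℝ) * (2 * ((T.card : ℝ) - ((T ∩ T').card : ℝ)) * C) := by
    calc ‖∑ g ∈ S', ((∑ h ∈ T, u g h) - ∑ h ∈ T', u g h)‖
        ≤ ∑ g ∈ S', ‖(∑ h ∈ T, u g h) - ∑ h ∈ T', u g h‖ := norm_sum_le _ _
      _ ≤ ∑ _g ∈ S', (2 * ((T.card : ℝ) - ((T ∩ T').card : ℝ)) * C) := by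
          gcongr with g
          exact sum_two_sets_diff_norm T T' (u g) (fun h => hC g h) hcT
      _ = (S.card : ℝ) * (2 * ((T.card : ℝ) - ((T ∩ T').card : ℝ)) * C) := by
          simp [Finset.sum_const, nsmul_eq_mul, hcS]
  calc ‖_ + _‖ ≤ _ + _ := norm_add_le _ _
    _ ≤ 2 * ((S.card : ℝ) - ((S ∩ S').card : ℝ)) * ((T.card : ℝ) * C)
        + (S.card : ℝ) * (2 * ((T.card : ℝ) - ((T ∩ T').card : ℝ)) * C) := add_le_add b1 b2
    _ = 2 * C * (((S.card : ℝ) - ((S ∩ S').card : ℝ)) * (T.card : ℝ)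
        + (S.card : ℝ) * ((T.card : ℝ) - ((T ∩ T').card : ℝ))) := by ring

private lemma vdc_swap_pairs {G : Type*} {M : Type*} [AddCommMonoid M]
    (S T U V : Finset G) (f : G → G → G → G → M) :
    (∑ j ∈ U, ∑ k ∈ V, ∑ g ∈ S, ∑ h ∈ T, f j k g h)
      = ∑ g ∈ S, ∑ h ∈ T, ∑ j ∈ U, ∑ k ∈ V, f j k g h := by
  have := Finset.sum_comm (s := U ×ˢ V) (t := S ×ˢ T)
    (f := fun p q => f p.1 p.2 q.1 q.2)
  simpa [Finset.sum_product] using this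

private lemma vdc_swap_block24 {G : Type*} {M : Type*} [AddCommMonoid M]
    (S T U V : Finset G) (f : G → G → G → G → G → G → M) :
    (∑ g ∈ S, ∑ h ∈ T, ∑ j ∈ U, ∑ j' ∈ U, ∑ k ∈ V, ∑ k' ∈ V, f j j' k k' g h)
      = ∑ j ∈ U, ∑ j' ∈ U, ∑ k ∈ V, ∑ k' ∈ V, ∑ g ∈ S, ∑ h ∈ T, f j j' k k' g h := by
  have := Finset.sum_comm (s := S ×ˢ T) (t := (U ×ˢ U) ×ˢ (V ×ˢ V))
    (f := fun p q => f q.1.1 q.1.2 q.2.1 q.2.2 p.1 p.2)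
  simpa [Finset.sum_product] using this

private lemma vdc_expand {G : Type*} [Mul G]
    {H : Type*} [NormedAddCommGroup H] [InnerProductSpace ℂ H]
    (u : G → G → H) (U V : Finset G) (g h : G) :
    ‖∑ j ∈ U, ∑ k ∈ V, u (j * g) (k * h)‖ ^ 2
      = ∑ j ∈ U, ∑ j' ∈ U, ∑ k ∈ V, ∑ k' ∈ V,
          (inner ℂ (u (j' * g) (k' * h)) (u (j * g) (k * h)) : ℂ).re := by
  have h1 : ‖∑ j ∈ U, ∑ k ∈ V, u (j * g) (k * h)‖ ^ 2
      = (inner ℂ (∑ j ∈ U, ∑ k ∈ V, u (j * g) (k * h))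
          (∑ j ∈ U, ∑ k ∈ V, u (j * g) (k * h)) : ℂ).re := by
    rw [← inner_self_eq_norm_sq (𝕜 := ℂ)]
    rfl
  rw [h1]
  simp only [sum_inner, inner_sum, Complex.re_sum]
  exact Finset.sum_congr rfl fun j _ => Finset.sum_comm

private lemma vdc_cs {G : Type*} [Mul G]
    {H : Type*} [NormedAddCommGroup H] [InnerProductSpace ℂ H]
    (u : G → G → H) (U V S T : Finset G) :
    ‖∑ g ∈ S, ∑ h ∈ T, ∑ j ∈ U, ∑ k ∈ V, u (j * g) (k * h)‖ ^ 2
      ≤ ((S.card : ℝ) * (T.card : ℝ)) *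
          ∑ j ∈ U, ∑ j' ∈ U, ∑ k ∈ V, ∑ k' ∈ V, ∑ g ∈ S, ∑ h ∈ T,
            (inner ℂ (u (j' * g) (k' * h)) (u (j * g) (k * h)) : ℂ).re := by
  set x : G → G → H := fun g h => ∑ j ∈ U, ∑ k ∈ V, u (j * g) (k * h) with hx
  have step1 : ‖∑ g ∈ S, ∑ h ∈ T, x g h‖ ≤ ∑ p ∈ S ×ˢ T, ‖x p.1 p.2‖ := by
    rw [Finset.sum_product]
    calc ‖∑ g ∈ S, ∑ h ∈ T, x g h‖ ≤ ∑ g ∈ S, ‖∑ h ∈ T, x g h‖ := norm_sum_le _ _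
      _ ≤ ∑ g ∈ S, ∑ h ∈ T, ‖x g h‖ := by gcongr; exact norm_sum_le _ _
  have step2 : (∑ p ∈ S ×ˢ T, ‖x p.1 p.2‖) ^ 2
      ≤ ((S.card : ℝ) * (T.card : ℝ)) * ∑ p ∈ S ×ˢ T, ‖x p.1 p.2‖ ^ 2 := by
    have := Finset.sum_mul_sq_le_sq_mul_sq (S ×ˢ T) (fun p => ‖x p.1 p.2‖) (fun _ => 1)
    simp only [mul_one, one_pow, Finset.sum_const, nsmul_eq_mul] at this
    calc (∑ p ∈ S ×ˢ T, ‖x p.1 p.2‖) ^ 2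
        ≤ (∑ p ∈ S ×ˢ T, ‖x p.1 p.2‖ ^ 2) * ((S ×ˢ T).card : ℝ) := this
      _ = ((S.card : ℝ) * (T.card : ℝ)) * ∑ p ∈ S ×ˢ T, ‖x p.1 p.2‖ ^ 2 := by
          rw [Finset.card_product]; push_cast; ring
  have step3 : (∑ p ∈ S ×ˢ T, ‖x p.1 p.2‖ ^ 2)
      = ∑ j ∈ U, ∑ j' ∈ U, ∑ k ∈ V, ∑ k' ∈ V, ∑ g ∈ S, ∑ h ∈ T,
          (inner ℂ (u (j' * g) (k' * h)) (u (j * g) (k * h)) : ℂ).re := by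
    rw [Finset.sum_product]
    rw [← vdc_swap_block24 S T U V]
    exact Finset.sum_congr rfl fun g _ => Finset.sum_congr rfl fun h _ =>
      vdc_expand u U V g h
  calc ‖∑ g ∈ S, ∑ h ∈ T, x g h‖ ^ 2
      ≤ (∑ p ∈ S ×ˢ T, ‖x p.1 p.2‖) ^ 2 := by
        have h0 : (0:ℝ) ≤ ‖∑ g ∈ S, ∑ h ∈ T, x g h‖ := norm_nonneg _
        exact pow_le_pow_left₀ h0 step1 2
    _ ≤ ((S.card : ℝ) * (T.card : ℝ)) * ∑ p ∈ S ×ˢ T, ‖x p.1 p.2‖ ^ 2 := step2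
    _ = _ := by rw [step3]

private lemma vdc_arith {X C Δ₁ Δ₂ P Q e εc : ℝ} (hb : X ≤ 2*C*(Δ₁*Q + P*Δ₂))
    (h1 : Δ₁ ≤ e*P) (h2 : Δ₂ ≤ e*Q) (hC0 : 0 ≤ C) (hP : 0 < P) (hQ : 0 < Q)
    (he : 0 < e) (hce : e*(C+1) = εc) : X ≤ 4*εc*(P*Q) := by
  have k1 : Δ₁*Q ≤ e*P*Q := mul_le_mul_of_nonneg_right h1 hQ.le
  have k2 : P*Δ₂ ≤ P*(e*Q) := mul_le_mul_of_nonneg_left h2 hP.le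
  have k3 : 2*C*(Δ₁*Q + P*Δ₂) ≤ 2*C*(e*P*Q + P*(e*Q)) :=
    mul_le_mul_of_nonneg_left (add_le_add k1 k2) (by linarith)
  have k4 : 2*C*(e*P*Q + P*(e*Q)) = 4*C*e*(P*Q) := by ring
  have k5 : 4*C*e*(P*Q) ≤ 4*(C+1)*e*(P*Q) := by nlinarith [mul_pos hP hQ]
  have k6 : 4*(C+1)*e*(P*Q) = 4*εc*(P*Q) := by rw [← hce]; ring
  linarith

set_option maxHeartbeats 4000000 in
/-- Corollary 4.2, double-variable van der Corput. If `{u_{g,h}}` is a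
bounded family in a Hilbert space and `Φ, Ψ` are two-sided Følner sequences with
`(1/(|Φₙ|²|Ψₙ|²))·limsup_m (1/(|Φₘ||Ψₘ|)) Σ_{j,j'∈Φₙ} Σ_{k,k'∈Ψₙ} Σ_{g∈Φₘ,h∈Ψₘ}
⟨u_{j'g,k'h}, u_{jg,kh}⟩ → 0` (taking real parts), then
`‖(1/(|Φₙ||Ψₙ|)) Σ_{(g,h)∈Φₙ×Ψₙ} u_{g,h}‖ → 0`. -/
theorem van_der_Corput_two_variables
    {G : Type*} [Group G] [Countable G] [DecidableEq G]
    {H : Type*} [NormedAddCommGroup H] [InnerProductSpace ℂ H] [CompleteSpace H]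
    (u : G → G → H) (hu : ∃ C : ℝ, ∀ g h, ‖u g h‖ ≤ C)
    (Φ Ψ : ℕ → Finset G) (hΦ : IsTwoSidedFolner Φ) (hΨ : IsTwoSidedFolner Ψ)
    (hvdc : Tendsto (fun n =>
        (1 / (((Φ n).card : ℝ) ^ 2 * ((Ψ n).card : ℝ) ^ 2)) *
          Filter.limsup (fun m =>
            (1 / (((Φ m).card : ℝ) * ((Ψ m).card : ℝ))) *
              ∑ j ∈ Φ n, ∑ j' ∈ Φ n, ∑ k ∈ Ψ n, ∑ k' ∈ Ψ n,
                ∑ g ∈ Φ m, ∑ h ∈ Ψ m,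
                  (inner ℂ (u (j' * g) (k' * h)) (u (j * g) (k * h)) : ℂ).re)
            Filter.atTop)
      atTop (nhds 0)) :
    Tendsto (fun n =>
        ‖(1 / (((Φ n).card : ℝ) * ((Ψ n).card : ℝ))) •
          ∑ g ∈ Φ n, ∑ h ∈ Ψ n, u g h‖) atTop (nhds 0) := by
  classical
  obtain ⟨C, hC⟩ := hu
  have hC0 : 0 ≤ C := le_trans (norm_nonneg _) (hC 1 1)
  rw [Metric.tendsto_atTop]
  intro ε hε
  have hε9 : (0:ℝ) < ε ^ 2 / 9 := by positivity
  obtain ⟨n, hn⟩ := (hvdc.eventually_lt_const hε9).exists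
  have hPn0 : (0:ℝ) < ((Φ n).card : ℝ) := by exact_mod_cast (hΦ.1.1 n).card_pos
  have hQn0 : (0:ℝ) < ((Ψ n).card : ℝ) := by exact_mod_cast (hΨ.1.1 n).card_pos
  set A : ℕ → ℝ := fun m =>
      (1 / (((Φ m).card : ℝ) * ((Ψ m).card : ℝ))) *
        ∑ j ∈ Φ n, ∑ j' ∈ Φ n, ∑ k ∈ Ψ n, ∑ k' ∈ Ψ n, ∑ g ∈ Φ m, ∑ h ∈ Ψ m,
          (inner ℂ (u (j' * g) (k' * h)) (u (j * g) (k * h)) : ℂ).re with hA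
  -- uniform bound on A
  have hAbd : ∀ m, A m ≤ ((Φ n).card : ℝ)^2 * ((Ψ n).card : ℝ)^2 * C^2 := by
    intro m
    have hPm0 : (0:ℝ) < ((Φ m).card : ℝ) := by exact_mod_cast (hΦ.1.1 m).card_pos
    have hQm0 : (0:ℝ) < ((Ψ m).card : ℝ) := by exact_mod_cast (hΨ.1.1 m).card_pos
    have hterm : ∀ a b c d : G, (inner ℂ (u a b) (u c d) : ℂ).re ≤ C^2 := by
      intro a b c d
      calc (inner ℂ (u a b) (u c d) : ℂ).re ≤ ‖(inner ℂ (u a b) (u c d) : ℂ)‖ :=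
            Complex.re_le_norm _
        _ = ‖(inner ℂ (u a b) (u c d) : ℂ)‖ := rfl
        _ ≤ ‖u a b‖ * ‖u c d‖ := norm_inner_le_norm _ _
        _ ≤ C * C := mul_le_mul (hC a b) (hC c d) (norm_nonneg _) hC0
        _ = C^2 := (sq C).symm
    have hsum : (∑ j ∈ Φ n, ∑ j' ∈ Φ n, ∑ k ∈ Ψ n, ∑ k' ∈ Ψ n, ∑ g ∈ Φ m, ∑ h ∈ Ψ m,
          (inner ℂ (u (j' * g) (k' * h)) (u (j * g) (k * h)) : ℂ).re)
        ≤ ∑ _j ∈ Φ n, ∑ _j' ∈ Φ n, ∑ _k ∈ Ψ n, ∑ _k' ∈ Ψ n, ∑ _g ∈ Φ m, ∑ _h ∈ Ψ m, C^2 := by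
      gcongr with j hj j' hj' k hk k' hk' g hg h hh
      exact hterm _ _ _ _
    have hconst : (∑ _j ∈ Φ n, ∑ _j' ∈ Φ n, ∑ _k ∈ Ψ n, ∑ _k' ∈ Ψ n, ∑ _g ∈ Φ m, ∑ _h ∈ Ψ m, (C^2:ℝ))
        = ((Φ n).card : ℝ)^2 * ((Ψ n).card : ℝ)^2 * (((Φ m).card : ℝ) * ((Ψ m).card : ℝ)) * C^2 := by
      simp [Finset.sum_const, nsmul_eq_mul]
      ring
    rw [hA]
    calc (1 / (((Φ m).card : ℝ) * ((Ψ m).card : ℝ))) *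
          ∑ j ∈ Φ n, ∑ j' ∈ Φ n, ∑ k ∈ Ψ n, ∑ k' ∈ Ψ n, ∑ g ∈ Φ m, ∑ h ∈ Ψ m,
            (inner ℂ (u (j' * g) (k' * h)) (u (j * g) (k * h)) : ℂ).re
        ≤ (1 / (((Φ m).card : ℝ) * ((Ψ m).card : ℝ))) *
            (((Φ n).card : ℝ)^2 * ((Ψ n).card : ℝ)^2 * (((Φ m).card : ℝ) * ((Ψ m).card : ℝ)) * C^2) := by
          rw [← hconst]
          exact mul_le_mul_of_nonneg_left hsum (by positivity)
      _ = ((Φ n).card : ℝ)^2 * ((Ψ n).card : ℝ)^2 * C^2 := by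
          field_simp
  have hbdd : IsBoundedUnder (· ≤ ·) atTop A :=
    isBoundedUnder_of ⟨((Φ n).card : ℝ)^2 * ((Ψ n).card : ℝ)^2 * C^2, hAbd⟩
  have hLsup : limsup A atTop < ε^2/9 * (((Φ n).card : ℝ)^2 * ((Ψ n).card : ℝ)^2) := by
    have hpos : (0:ℝ) < ((Φ n).card : ℝ)^2 * ((Ψ n).card : ℝ)^2 := by positivity
    have h' := mul_lt_mul_of_pos_left hn hpos
    calc limsup A atTop
        = (((Φ n).card : ℝ)^2 * ((Ψ n).card : ℝ)^2) *
            ((1 / (((Φ n).card : ℝ)^2 * ((Ψ n).card : ℝ)^2)) * limsup A atTop) := by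
          rw [← mul_assoc, mul_one_div_cancel (ne_of_gt hpos), one_mul]
      _ < (((Φ n).card : ℝ)^2 * ((Ψ n).card : ℝ)^2) * (ε^2/9) := h'
      _ = ε^2/9 * (((Φ n).card : ℝ)^2 * ((Ψ n).card : ℝ)^2) := by ring
  have hev1 : ∀ᶠ m in atTop, A m < ε^2/9 * (((Φ n).card : ℝ)^2 * ((Ψ n).card : ℝ)^2) :=
    eventually_lt_of_limsup_lt hLsup hbdd
  set e : ℝ := ε / (24 * (C + 1)) with he
  have he0 : 0 < e := by rw [he]; positivity
  have hce : e * (C + 1) = ε / 24 := by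
    rw [he]; field_simp
  have hev2 : ∀ᶠ m in atTop, ∀ j ∈ Φ n,
      ((Φ m).card : ℝ) - (((Φ m ∩ (Φ m).image (j * ·)).card : ℝ)) ≤ e * ((Φ m).card : ℝ) := by
    rw [eventually_all_finset]
    intro j _
    filter_upwards [(hΦ.1.2 j).eventually_const_lt (show 1 - e < 1 by linarith)] with m hm
    have hPm0 : (0:ℝ) < ((Φ m).card : ℝ) := by exact_mod_cast (hΦ.1.1 m).card_pos
    rw [lt_div_iff₀ hPm0] at hm
    nlinarith
  have hev3 : ∀ᶠ m in atTop, ∀ k ∈ Ψ n,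
      ((Ψ m).card : ℝ) - (((Ψ m ∩ (Ψ m).image (k * ·)).card : ℝ)) ≤ e * ((Ψ m).card : ℝ) := by
    rw [eventually_all_finset]
    intro k _
    filter_upwards [(hΨ.1.2 k).eventually_const_lt (show 1 - e < 1 by linarith)] with m hm
    have hQm0 : (0:ℝ) < ((Ψ m).card : ℝ) := by exact_mod_cast (hΨ.1.1 m).card_pos
    rw [lt_div_iff₀ hQm0] at hm
    nlinarith
  obtain ⟨N, hN⟩ := eventually_atTop.mp (hev1.and (hev2.and hev3))
  refine ⟨N, fun m hm => ?_⟩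
  obtain ⟨h1, h2, h3⟩ := hN m hm
  have hPm0 : (0:ℝ) < ((Φ m).card : ℝ) := by exact_mod_cast (hΦ.1.1 m).card_pos
  have hQm0 : (0:ℝ) < ((Ψ m).card : ℝ) := by exact_mod_cast (hΨ.1.1 m).card_pos
  -- abbreviations
  set Sm : H := ∑ g ∈ Φ m, ∑ h ∈ Ψ m, u g h with hSm
  set w : H := (1 / (((Φ n).card : ℝ) * ((Ψ n).card : ℝ) * ((Φ m).card : ℝ) * ((Ψ m).card : ℝ))) •
      ∑ j ∈ Φ n, ∑ k ∈ Ψ n, ∑ g ∈ Φ m, ∑ h ∈ Ψ m, u (j * g) (k * h) with hw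
  -- key identity
  have key : (1 / (((Φ m).card : ℝ) * ((Ψ m).card : ℝ))) • Sm - w
      = (1 / (((Φ n).card : ℝ) * ((Ψ n).card : ℝ) * ((Φ m).card : ℝ) * ((Ψ m).card : ℝ))) •
          ∑ j ∈ Φ n, ∑ k ∈ Ψ n, (Sm - ∑ g ∈ Φ m, ∑ h ∈ Ψ m, u (j * g) (k * h)) := by
    have hsub : (∑ j ∈ Φ n, ∑ k ∈ Ψ n, (Sm - ∑ g ∈ Φ m, ∑ h ∈ Ψ m, u (j * g) (k * h)))
        = ((((Φ n).card : ℝ) * ((Ψ n).card : ℝ)) • Sm)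
          - ∑ j ∈ Φ n, ∑ k ∈ Ψ n, ∑ g ∈ Φ m, ∑ h ∈ Ψ m, u (j * g) (k * h) := by
      simp only [Finset.sum_sub_distrib, Finset.sum_const]
      congr 1
      rw [mul_smul, Nat.cast_smul_eq_nsmul, Nat.cast_smul_eq_nsmul]
    rw [hsub, smul_sub, ← hw, smul_smul]
    congr 2
    field_simp
  -- claim 1: error bound
  have claim1 : ‖(1 / (((Φ m).card : ℝ) * ((Ψ m).card : ℝ))) • Sm - w‖ ≤ ε / 6 := by
    rw [key, norm_smul]
    have hcpos : (0:ℝ) < 1 / (((Φ n).card : ℝ) * ((Ψ n).card : ℝ) * ((Φ m).card : ℝ) * ((Ψ m).card : ℝ)) := by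
      positivity
    rw [Real.norm_eq_abs, abs_of_pos hcpos]
    have hbound : ‖∑ j ∈ Φ n, ∑ k ∈ Ψ n, (Sm - ∑ g ∈ Φ m, ∑ h ∈ Ψ m, u (j * g) (k * h))‖
        ≤ (((Φ n).card : ℝ) * ((Ψ n).card : ℝ)) * (ε / 6 * (((Φ m).card : ℝ) * ((Ψ m).card : ℝ))) := by
      calc ‖∑ j ∈ Φ n, ∑ k ∈ Ψ n, (Sm - ∑ g ∈ Φ m, ∑ h ∈ Ψ m, u (j * g) (k * h))‖
          ≤ ∑ j ∈ Φ n, ∑ k ∈ Ψ n, ‖Sm - ∑ g ∈ Φ m, ∑ h ∈ Ψ m, u (j * g) (k * h)‖ := by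
            refine le_trans (norm_sum_le _ _) ?_
            exact Finset.sum_le_sum fun j _ => norm_sum_le _ _
        _ ≤ ∑ _j ∈ Φ n, ∑ _k ∈ Ψ n, (ε / 6 * (((Φ m).card : ℝ) * ((Ψ m).card : ℝ))) := by
            refine Finset.sum_le_sum fun j hj => Finset.sum_le_sum fun k hk => ?_
            have hb := vdc_shift_error u hC (Φ m) (Ψ m) j k
            have hΔ1 := h2 j hj
            have hΔ2 := h3 k hk
            rw [hSm]
            have harith := vdc_arith hb hΔ1 hΔ2 hC0 hPm0 hQm0 he0 hce
            calc ‖(∑ g ∈ Φ m, ∑ h ∈ Ψ m, u g h) - ∑ g ∈ Φ m, ∑ h ∈ Ψ m, u (j * g) (k * h)‖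
                ≤ 4 * (ε/24) * (((Φ m).card : ℝ) * ((Ψ m).card : ℝ)) := harith
              _ = ε / 6 * (((Φ m).card : ℝ) * ((Ψ m).card : ℝ)) := by ring
        _ = (((Φ n).card : ℝ) * ((Ψ n).card : ℝ)) * (ε / 6 * (((Φ m).card : ℝ) * ((Ψ m).card : ℝ))) := by
            simp [Finset.sum_const, nsmul_eq_mul]
            ring
    calc (1 / (((Φ n).card : ℝ) * ((Ψ n).card : ℝ) * ((Φ m).card : ℝ) * ((Ψ m).card : ℝ))) *
          ‖∑ j ∈ Φ n, ∑ k ∈ Ψ n, (Sm - ∑ g ∈ Φ m, ∑ h ∈ Ψ m, u (j * g) (k * h))‖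
        ≤ (1 / (((Φ n).card : ℝ) * ((Ψ n).card : ℝ) * ((Φ m).card : ℝ) * ((Ψ m).card : ℝ))) *
            ((((Φ n).card : ℝ) * ((Ψ n).card : ℝ)) * (ε / 6 * (((Φ m).card : ℝ) * ((Ψ m).card : ℝ)))) :=
          mul_le_mul_of_nonneg_left hbound hcpos.le
      _ = ε / 6 := by field_simp
  -- claim 2: Cauchy–Schwarz bound
  have claim2 : ‖w‖ < ε / 3 := by
    have hw2 : ‖w‖^2 ≤ (1 / (((Φ n).card : ℝ)^2 * ((Ψ n).card : ℝ)^2)) * A m := by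
      rw [hw, norm_smul, Real.norm_eq_abs, abs_of_pos (by positivity :
        (0:ℝ) < 1 / (((Φ n).card : ℝ) * ((Ψ n).card : ℝ) * ((Φ m).card : ℝ) * ((Ψ m).card : ℝ))),
        mul_pow]
      have hswap : (∑ j ∈ Φ n, ∑ k ∈ Ψ n, ∑ g ∈ Φ m, ∑ h ∈ Ψ m, u (j * g) (k * h))
          = ∑ g ∈ Φ m, ∑ h ∈ Ψ m, ∑ j ∈ Φ n, ∑ k ∈ Ψ n, u (j * g) (k * h) :=
        vdc_swap_pairs (Φ m) (Ψ m) (Φ n) (Ψ n) (fun j k g h => u (j * g) (k * h))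
      rw [hswap]
      have hcs := vdc_cs u (Φ n) (Ψ n) (Φ m) (Ψ m)
      calc (1 / (((Φ n).card : ℝ) * ((Ψ n).card : ℝ) * ((Φ m).card : ℝ) * ((Ψ m).card : ℝ)))^2 *
            ‖∑ g ∈ Φ m, ∑ h ∈ Ψ m, ∑ j ∈ Φ n, ∑ k ∈ Ψ n, u (j * g) (k * h)‖^2
          ≤ (1 / (((Φ n).card : ℝ) * ((Ψ n).card : ℝ) * ((Φ m).card : ℝ) * ((Ψ m).card : ℝ)))^2 *
              ((((Φ m).card : ℝ) * ((Ψ m).card : ℝ)) *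
                ∑ j ∈ Φ n, ∑ j' ∈ Φ n, ∑ k ∈ Ψ n, ∑ k' ∈ Ψ n, ∑ g ∈ Φ m, ∑ h ∈ Ψ m,
                  (inner ℂ (u (j' * g) (k' * h)) (u (j * g) (k * h)) : ℂ).re) :=
            mul_le_mul_of_nonneg_left hcs (by positivity)
        _ = (1 / (((Φ n).card : ℝ)^2 * ((Ψ n).card : ℝ)^2)) * A m := by
            rw [hA]
            field_simp
    have hlt : ‖w‖^2 < (ε/3)^2 := by
      refine lt_of_le_of_lt hw2 ?_
      have := mul_lt_mul_of_pos_left h1 (by positivity :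
        (0:ℝ) < 1 / (((Φ n).card : ℝ)^2 * ((Ψ n).card : ℝ)^2))
      calc (1 / (((Φ n).card : ℝ)^2 * ((Ψ n).card : ℝ)^2)) * A m
          < (1 / (((Φ n).card : ℝ)^2 * ((Ψ n).card : ℝ)^2)) *
              (ε^2/9 * (((Φ n).card : ℝ)^2 * ((Ψ n).card : ℝ)^2)) := this
        _ = (ε/3)^2 := by field_simp; ring
    exact lt_of_pow_lt_pow_left₀ 2 (by positivity) hlt
  -- combine
  rw [Real.dist_eq, sub_zero, abs_of_nonneg (norm_nonneg _)]
  calc ‖(1 / (((Φ m).card : ℝ) * ((Ψ m).card : ℝ))) • Sm‖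
      = ‖w + ((1 / (((Φ m).card : ℝ) * ((Ψ m).card : ℝ))) • Sm - w)‖ := by
        congr 1
        abel
    _ ≤ ‖w‖ + ‖(1 / (((Φ m).card : ℝ) * ((Ψ m).card : ℝ))) • Sm - w‖ := norm_add_le _ _
    _ < ε / 3 + ε / 6 := add_lt_add_of_lt_of_le claim2 claim1
    _ < ε := by linarith
end

section
/- Let G be a countable group admitting a two-sided Følner sequence, H a Banach space, and {u_{g,h} : g, h ∈ G} a bounded family in H. Suppose that there exist L, L' ∈ H such that for all two-sided Følner sequences Φ, Ψ in G: (i) L = lim_{n→∞} (1/(|Φ_n||Ψ_n|)) Σ_{(g,h)∈Φ_n×Ψ_n} u_{g,h}, and (ii) for each g ∈ G the limit v_g := lim_{m→∞} (1/|Ψ_m|) Σ_{h∈Ψ_m} u_{g,h} exists, is independent of Ψ, and L' = lim_{n→∞} (1/|Φ_n|) Σ_{g∈Φ_n} v_g. Then L = L'. -/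
open MeasureTheory Filter

/-- iterated limits claim. Let `{u_{g,h}}` be a bounded family in a
Banach space such that for all two-sided Følner sequences `Φ, Ψ` the double averages
converge to `L`, and the iterated averages (first in `h` along `Ψ`, giving `v g`
independent of `Ψ`, then in `g` along `Φ`) converge to `L'`. Then `L = L'`. -/
theorem double_limit_eq_iterated_limit
    {G : Type*} [Group G] [Countable G] [DecidableEq G]
    (hFol : ∃ Φ : ℕ → Finset G, IsTwoSidedFolner Φ)
    {H : Type*} [NormedAddCommGroup H] [NormedSpace ℝ H] [CompleteSpace H]
    (u : G → G → H) (hu : ∃ C : ℝ, ∀ g h, ‖u g h‖ ≤ C)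
    (L L' : H) (v : G → H)
    (hL : ∀ Φ Ψ : ℕ → Finset G, IsTwoSidedFolner Φ → IsTwoSidedFolner Ψ →
      Tendsto (fun n =>
          (1 / (((Φ n).card : ℝ) * ((Ψ n).card : ℝ))) •
            ∑ g ∈ Φ n, ∑ h ∈ Ψ n, u g h)
        atTop (nhds L))
    (hv : ∀ g : G, ∀ Ψ : ℕ → Finset G, IsTwoSidedFolner Ψ →
      Tendsto (fun m => (1 / ((Ψ m).card : ℝ)) • ∑ h ∈ Ψ m, u g h)
        atTop (nhds (v g)))
    (hL' : ∀ Φ : ℕ → Finset G, IsTwoSidedFolner Φ →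
      Tendsto (fun n => (1 / ((Φ n).card : ℝ)) • ∑ g ∈ Φ n, v g)
        atTop (nhds L')) :
    L = L' := by
  obtain ⟨Φ, hΦ⟩ := hFol
  have key : ∀ n : ℕ, ∃ M : ℕ, ∀ m ≥ M, ∀ g ∈ Φ n,
      ‖(1 / ((Φ m).card : ℝ)) • ∑ h ∈ Φ m, u g h - v g‖ ≤ 1 / (n + 1 : ℝ) := by
    intro n
    have hev : ∀ᶠ m in atTop, ∀ g ∈ Φ n,
        ‖(1 / ((Φ m).card : ℝ)) • ∑ h ∈ Φ m, u g h - v g‖ ≤ 1 / (n + 1 : ℝ) := by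
      rw [Filter.eventually_all_finset]
      intro g _
      have h1 : Tendsto (fun m => ‖(1 / ((Φ m).card : ℝ)) • ∑ h ∈ Φ m, u g h - v g‖)
          atTop (nhds 0) := by
        have := (hv g Φ hΦ).sub_const (v g)
        simpa using this.norm
      have hpos : (0 : ℝ) < 1 / (n + 1 : ℝ) := by positivity
      filter_upwards [h1.eventually_lt_const hpos] with m hm using hm.le
    exact eventually_atTop.mp hev
  choose M hM using key
  set m : ℕ → ℕ := fun n => max (M n) n with hm_def
  have hmt : Tendsto m atTop atTop :=
    tendsto_atTop_mono (fun n => le_max_right _ _) tendsto_id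
  have hΨ : IsTwoSidedFolner (fun n => Φ (m n)) :=
    ⟨⟨fun n => hΦ.1.1 (m n), fun γ => (hΦ.1.2 γ).comp hmt⟩, fun γ => (hΦ.2 γ).comp hmt⟩
  have hD := hL Φ (fun n => Φ (m n)) hΦ hΨ
  have hA := hL' Φ hΦ
  have hbound : ∀ n,
      ‖(1 / (((Φ n).card : ℝ) * ((Φ (m n)).card : ℝ))) • ∑ g ∈ Φ n, ∑ h ∈ Φ (m n), u g h
        - (1 / ((Φ n).card : ℝ)) • ∑ g ∈ Φ n, v g‖ ≤ 1 / (n + 1 : ℝ) := by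
    intro n
    have hcard : (0 : ℝ) < ((Φ n).card : ℝ) := by exact_mod_cast (hΦ.1.1 n).card_pos
    have heq : (1 / (((Φ n).card : ℝ) * ((Φ (m n)).card : ℝ))) •
          ∑ g ∈ Φ n, ∑ h ∈ Φ (m n), u g h
          - (1 / ((Φ n).card : ℝ)) • ∑ g ∈ Φ n, v g
        = (1 / ((Φ n).card : ℝ)) • ∑ g ∈ Φ n,
            ((1 / ((Φ (m n)).card : ℝ)) • ∑ h ∈ Φ (m n), u g h - v g) := by
      rw [Finset.sum_sub_distrib, smul_sub, ← Finset.smul_sum, smul_smul,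
        one_div_mul_one_div]
    rw [heq, norm_smul]
    have h2 : ‖∑ g ∈ Φ n, ((1 / ((Φ (m n)).card : ℝ)) • ∑ h ∈ Φ (m n), u g h - v g)‖
        ≤ ((Φ n).card : ℝ) * (1 / (n + 1 : ℝ)) := by
      calc ‖∑ g ∈ Φ n, ((1 / ((Φ (m n)).card : ℝ)) • ∑ h ∈ Φ (m n), u g h - v g)‖
          ≤ ∑ g ∈ Φ n, ‖(1 / ((Φ (m n)).card : ℝ)) • ∑ h ∈ Φ (m n), u g h - v g‖ :=
            norm_sum_le _ _
        _ ≤ ∑ _g ∈ Φ n, (1 / (n + 1 : ℝ)) := by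
            apply Finset.sum_le_sum
            intro g hg
            exact hM n (m n) (le_max_left _ _) g hg
        _ = ((Φ n).card : ℝ) * (1 / (n + 1 : ℝ)) := by
            rw [Finset.sum_const, nsmul_eq_mul]
    calc ‖(1 / ((Φ n).card : ℝ))‖ *
          ‖∑ g ∈ Φ n, ((1 / ((Φ (m n)).card : ℝ)) • ∑ h ∈ Φ (m n), u g h - v g)‖
        ≤ (1 / ((Φ n).card : ℝ)) * (((Φ n).card : ℝ) * (1 / (n + 1 : ℝ))) := by
          apply mul_le_mul _ h2 (norm_nonneg _) (by positivity)
          rw [Real.norm_eq_abs, abs_of_pos (by positivity)]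
      _ = 1 / (n + 1 : ℝ) := by field_simp
  have hdiff : Tendsto (fun n =>
      (1 / (((Φ n).card : ℝ) * ((Φ (m n)).card : ℝ))) • ∑ g ∈ Φ n, ∑ h ∈ Φ (m n), u g h
      - (1 / ((Φ n).card : ℝ)) • ∑ g ∈ Φ n, v g) atTop (nhds 0) :=
    squeeze_zero_norm hbound tendsto_one_div_add_atTop_nhds_zero_nat
  have hD' : Tendsto (fun n =>
      (1 / (((Φ n).card : ℝ) * ((Φ (m n)).card : ℝ))) •
        ∑ g ∈ Φ n, ∑ h ∈ Φ (m n), u g h) atTop (nhds L') := by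
    have := hA.add hdiff
    rw [add_zero] at this
    convert this using 2 with n
    abel
  exact tendsto_nhds_unique hD hD'
end

section
/- Let G be a countable group and Φ a left Følner sequence in G × G. Let Ω = {0,1}^{G×G} with the product topology, with commuting G-actions T and S defined by (T_g ξ)(g₁, g₂) = ξ(g₁g, g₂) and (S_g ξ)(g₁, g₂) = ξ(g₁, g₂g). Let E ⊆ G × G, let 1_E ∈ Ω be its indicator function, and let X = closure of {T_g S_h 1_E : g, h ∈ G} in Ω. If d̄(E) = limsup_{n→∞} |E ∩ Φ_n|/|Φ_n| > 0, then there exists a Borel probability measure μ on X invariant under T_g and S_g for every g ∈ G such that μ({η ∈ X : η(e, e) = 1}) = d̄(E), where e is the identity of G. -/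
open MeasureTheory Filter

open Topology Set TopologicalSpace

set_option linter.unusedSectionVars false

section Aux

variable {Γ : Type*} [Group Γ] [DecidableEq Γ]

/-- The orbit point `T_γ 1_E`. -/
def corrOrb (E : Set Γ) [DecidablePred (· ∈ E)] (γ : Γ) : Γ → Bool :=
  fun p => if p * γ ∈ E then true else false

/-- Empirical density of visits of the orbit to `C` over the Følner set `Φ n`. -/
noncomputable def corrEmp (Φ : ℕ → Finset Γ) (E : Set Γ) [DecidablePred (· ∈ E)]
    (C : Set (Γ → Bool)) (n : ℕ) : ℝ :=
  ((@Finset.filter _ (fun x => corrOrb E x ∈ C) (Classical.decPred _) (Φ n)).card : ℝ)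
    / ((Φ n).card : ℝ)

variable (Φ : ℕ → Finset Γ) (E : Set Γ) [DecidablePred (· ∈ E)]

lemma corrEmp_eq (C : Set (Γ → Bool)) (n : ℕ) [DecidablePred (fun x => corrOrb E x ∈ C)] :
    corrEmp Φ E C n
      = (((Φ n).filter (fun x => corrOrb E x ∈ C)).card : ℝ) / ((Φ n).card : ℝ) := by
  unfold corrEmp
  congr!

lemma corrEmp_nonneg (C : Set (Γ → Bool)) (n : ℕ) : 0 ≤ corrEmp Φ E C n :=
  div_nonneg (Nat.cast_nonneg _) (Nat.cast_nonneg _)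

lemma corrEmp_le_one (C : Set (Γ → Bool)) (n : ℕ) : corrEmp Φ E C n ≤ 1 := by
  classical
  rw [corrEmp_eq]
  exact div_le_one_of_le₀ (Nat.cast_le.mpr (Finset.card_filter_le _ _)) (Nat.cast_nonneg _)

lemma corrEmp_univ (hn : ∀ n, (Φ n).Nonempty) (n : ℕ) : corrEmp Φ E univ n = 1 := by
  classical
  rw [corrEmp_eq, Finset.filter_true_of_mem (fun x _ => mem_univ _)]
  exact div_self (Nat.cast_ne_zero.mpr (hn n).card_pos.ne')

lemma corrEmp_mono {C D : Set (Γ → Bool)} (h : C ⊆ D) (n : ℕ) :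
    corrEmp Φ E C n ≤ corrEmp Φ E D n := by
  classical
  rw [corrEmp_eq, corrEmp_eq]
  rcases Nat.eq_zero_or_pos (Φ n).card with h0 | h0
  · simp [h0]
  · have hN : (0:ℝ) < ((Φ n).card : ℝ) := by exact_mod_cast h0
    refine (div_le_div_iff_of_pos_right hN).mpr ?_
    refine Nat.cast_le.mpr (Finset.card_le_card ?_)
    intro x hx
    rw [Finset.mem_filter] at hx ⊢
    exact ⟨hx.1, h hx.2⟩

lemma corrEmp_union_le (C D : Set (Γ → Bool)) (n : ℕ) :
    corrEmp Φ E (C ∪ D) n ≤ corrEmp Φ E C n + corrEmp Φ E D n := by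
  classical
  rw [corrEmp_eq, corrEmp_eq, corrEmp_eq, ← add_div]
  rcases Nat.eq_zero_or_pos (Φ n).card with h0 | h0
  · simp [h0]
  have hN : (0:ℝ) < ((Φ n).card : ℝ) := by exact_mod_cast h0
  refine (div_le_div_iff_of_pos_right hN).mpr ?_
  rw [← Nat.cast_add]
  refine Nat.cast_le.mpr ?_
  have h1 : ((Φ n).filter (fun x => corrOrb E x ∈ C ∪ D))
      = ((Φ n).filter (fun x => corrOrb E x ∈ C ∨ corrOrb E x ∈ D)) := by
    simp only [Set.mem_union]
  rw [h1, Finset.filter_or]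
  exact Finset.card_union_le _ _

lemma corrEmp_union_disjoint {C D : Set (Γ → Bool)} (h : Disjoint C D) (n : ℕ) :
    corrEmp Φ E (C ∪ D) n = corrEmp Φ E C n + corrEmp Φ E D n := by
  classical
  rw [corrEmp_eq, corrEmp_eq, corrEmp_eq, ← add_div]
  congr 1
  rw [← Nat.cast_add]
  congr 1
  have h1 : ((Φ n).filter (fun x => corrOrb E x ∈ C ∪ D))
      = ((Φ n).filter (fun x => corrOrb E x ∈ C ∨ corrOrb E x ∈ D)) := by
    simp only [Set.mem_union]
  rw [h1, Finset.filter_or]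
  rw [Finset.card_union_of_disjoint]
  rw [Finset.disjoint_left]
  intro a ha hb
  rw [Finset.mem_filter] at ha hb
  exact Set.disjoint_left.mp h ha.2 hb.2

lemma corrEmp_zero {C : Set (Γ → Bool)} (h : ∀ γ : Γ, corrOrb E γ ∉ C) (n : ℕ) :
    corrEmp Φ E C n = 0 := by
  classical
  rw [corrEmp_eq, Finset.filter_false_of_mem (fun x _ => h x)]
  simp

lemma corrEmp_point (n : ℕ) :
    corrEmp Φ E {η : Γ → Bool | η 1 = true} n
      = ((E ∩ ↑(Φ n)).ncard : ℝ) / ((Φ n).card : ℝ) := by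
  classical
  rw [corrEmp_eq]
  congr 2
  have h1 : ((Φ n).filter (fun x => corrOrb E x ∈ {η : Γ → Bool | η 1 = true}))
      = (Φ n).filter (· ∈ E) := by
    apply Finset.filter_congr
    intro x _
    simp [corrOrb, one_mul, Set.mem_setOf_eq]
  rw [h1]
  have h2 : E ∩ ↑(Φ n) = ↑((Φ n).filter (· ∈ E)) := by
    ext x
    simp [Finset.mem_filter, and_comm]
  rw [h2, Set.ncard_coe_finset]

lemma corrEmp_shift {n' : ℕ} (γ : Γ) (C : Set (Γ → Bool)) (hn : (Φ n').Nonempty) :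
    |corrEmp Φ E ((fun ξ : Γ → Bool => fun p => ξ (p * γ)) ⁻¹' C) n' - corrEmp Φ E C n'|
      ≤ 1 - ((Φ n' ∩ (Φ n').image (γ * ·)).card : ℝ) / ((Φ n').card : ℝ) := by
  classical
  rw [corrEmp_eq, corrEmp_eq]
  set s := Φ n' with hs
  set P := s.image (γ * ·) with hP
  have hinj : Function.Injective (γ * ·) := mul_right_injective γ
  have hPcard : P.card = s.card := Finset.card_image_of_injective _ hinj
  have hpre : ∀ x : Γ, (corrOrb E x ∈ (fun ξ : Γ → Bool => fun p => ξ (p * γ)) ⁻¹' C)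
      ↔ corrOrb E (γ * x) ∈ C := by
    intro x
    have heq : (fun p => corrOrb E x (p * γ)) = corrOrb E (γ * x) := by
      funext p
      simp [corrOrb, mul_assoc]
    simp only [Set.mem_preimage]
    rw [heq]
  have hcard1 :
      (s.filter (fun x => corrOrb E x ∈ (fun ξ : Γ → Bool => fun p => ξ (p * γ)) ⁻¹' C)).card
      = (P.filter (fun x => corrOrb E x ∈ C)).card := by
    rw [Finset.filter_congr (fun x _ => by rw [hpre x])]
    rw [hP, Finset.filter_image]
    rw [Finset.card_image_of_injective _ hinj]
  set a := (P.filter (fun x => corrOrb E x ∈ C)).card with ha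
  set b := (s.filter (fun x => corrOrb E x ∈ C)).card with hb
  have hab : a ≤ b + (P \ s).card := by
    have hsub : P.filter (fun x => corrOrb E x ∈ C)
        ⊆ s.filter (fun x => corrOrb E x ∈ C) ∪ (P \ s) := by
      intro x hx
      rw [Finset.mem_filter] at hx
      by_cases hxs : x ∈ s
      · exact Finset.mem_union_left _ (Finset.mem_filter.mpr ⟨hxs, hx.2⟩)
      · exact Finset.mem_union_right _ (Finset.mem_sdiff.mpr ⟨hx.1, hxs⟩)
    calc a ≤ (s.filter (fun x => corrOrb E x ∈ C) ∪ (P \ s)).card := Finset.card_le_card hsub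
      _ ≤ b + (P \ s).card := Finset.card_union_le _ _
  have hba : b ≤ a + (s \ P).card := by
    have hsub : s.filter (fun x => corrOrb E x ∈ C)
        ⊆ P.filter (fun x => corrOrb E x ∈ C) ∪ (s \ P) := by
      intro x hx
      rw [Finset.mem_filter] at hx
      by_cases hxP : x ∈ P
      · exact Finset.mem_union_left _ (Finset.mem_filter.mpr ⟨hxP, hx.2⟩)
      · exact Finset.mem_union_right _ (Finset.mem_sdiff.mpr ⟨hx.1, hxP⟩)
    calc b ≤ (P.filter (fun x => corrOrb E x ∈ C) ∪ (s \ P)).card := Finset.card_le_card hsub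
      _ ≤ a + (s \ P).card := Finset.card_union_le _ _
  have hN : (0:ℝ) < (s.card : ℝ) := by exact_mod_cast hn.card_pos
  have hi1 : ((P ∩ s).card) + ((P \ s).card) = P.card := Finset.card_inter_add_card_sdiff P s
  have hi2 : ((s ∩ P).card) + ((s \ P).card) = s.card := Finset.card_inter_add_card_sdiff s P
  have hinter : (P ∩ s).card = (s ∩ P).card := by rw [Finset.inter_comm]
  have habs : |(a : ℝ) - (b : ℝ)| ≤ (s.card : ℝ) - ((s ∩ P).card : ℝ) := by
    have c1 : (a:ℝ) ≤ (b:ℝ) + ((P \ s).card : ℝ) := by exact_mod_cast hab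
    have c2 : (b:ℝ) ≤ (a:ℝ) + ((s \ P).card : ℝ) := by exact_mod_cast hba
    have c3 : ((P ∩ s).card : ℝ) + ((P \ s).card : ℝ) = (P.card : ℝ) := by exact_mod_cast hi1
    have c4 : ((s ∩ P).card : ℝ) + ((s \ P).card : ℝ) = (s.card : ℝ) := by exact_mod_cast hi2
    have c5 : ((P ∩ s).card : ℝ) = ((s ∩ P).card : ℝ) := by exact_mod_cast hinter
    have c6 : (P.card : ℝ) = (s.card : ℝ) := by exact_mod_cast hPcard
    rw [abs_sub_le_iff]
    constructor <;> linarith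
  rw [hcard1, div_sub_div_same, abs_div, abs_of_pos hN]
  have hgoal : (1:ℝ) - ((s ∩ P).card : ℝ) / (s.card : ℝ)
      = ((s.card : ℝ) - ((s ∩ P).card : ℝ)) / (s.card : ℝ) := by
    field_simp
  rw [hgoal]
  exact (div_le_div_iff_of_pos_right hN).mpr habs

end Aux

section Extraction

/-- From `limsup f = δ` for a bounded real sequence, extract a subsequence tending to `δ`. -/
lemma corr_exists_subseq_tendsto (f : ℕ → ℝ) (h0 : ∀ n, 0 ≤ f n) (h1 : ∀ n, f n ≤ 1)
    (δ : ℝ) (hδ : Filter.limsup f Filter.atTop = δ) :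
    ∃ φ : ℕ → ℕ, StrictMono φ ∧ Tendsto (f ∘ φ) atTop (𝓝 δ) := by
  have hb : IsBoundedUnder (· ≤ ·) atTop f := ⟨1, eventually_map.2 (Eventually.of_forall h1)⟩
  have hb' : IsBoundedUnder (· ≥ ·) atTop f := ⟨0, eventually_map.2 (Eventually.of_forall h0)⟩
  have hcb : IsCoboundedUnder (· ≤ ·) atTop f := hb'.isCoboundedUnder_le
  have key : ∀ m : ℕ, ∃ᶠ n in atTop, |f n - δ| < 1 / (m + 1) := by
    intro m
    have hε : (0 : ℝ) < 1 / (m + 1) := by positivity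
    have h2 : ∀ᶠ n in atTop, f n < δ + 1 / (m + 1) :=
      eventually_lt_of_limsup_lt (by rw [hδ]; linarith) hb
    have h3 : ∃ᶠ n in atTop, δ - 1 / (m + 1) < f n :=
      frequently_lt_of_lt_limsup hcb (by rw [hδ]; linarith)
    refine (h3.and_eventually h2).mono ?_
    rintro n ⟨hn1, hn2⟩
    rw [abs_sub_lt_iff]
    constructor <;> linarith
  obtain ⟨φ, hφ, hφ2⟩ := Filter.extraction_forall_of_frequently key
  refine ⟨φ, hφ, ?_⟩
  rw [← tendsto_sub_nhds_zero_iff]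
  exact squeeze_zero_norm (fun m => (hφ2 m).le) tendsto_one_div_add_atTop_nhds_zero_nat

end Extraction

section Clopen

variable {X : Type*} [TopologicalSpace X] [CompactSpace X] [T2Space X]
  [TotallyDisconnectedSpace X]

/-- In a compact Hausdorff totally disconnected space, a compact set inside an open set can be
separated by a clopen set. -/
lemma corr_exists_clopen_between {K U : Set X} (hK : IsCompact K) (hU : IsOpen U)
    (hKU : K ⊆ U) : ∃ C : Set X, IsClopen C ∧ K ⊆ C ∧ C ⊆ U := by
  have h : ∀ x ∈ K, ∃ V : Set X, IsClopen V ∧ x ∈ V ∧ V ⊆ U := fun x hx =>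
    compact_exists_isClopen_in_isOpen hU (hKU hx)
  choose! V hV hxV hVU using h
  obtain ⟨t, htK, hcover⟩ := hK.elim_nhds_subcover V
    (fun x hx => (hV x hx).2.mem_nhds (hxV x hx))
  refine ⟨⋃ x ∈ t, V x, ?_, hcover, ?_⟩
  · exact isClopen_biUnion_finset (fun x hx => hV x (htK x hx))
  · exact Set.iUnion₂_subset fun x hx => hVU x (htK x hx)

end Clopen

section Dens

variable {Γ : Type*} [Group Γ] [DecidableEq Γ]
variable (Φ : ℕ → Finset Γ) (E : Set Γ) [DecidablePred (· ∈ E)]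

/-- A fixed ultrafilter extending `atTop` on `ℕ`. -/
noncomputable def corrU : Ultrafilter ℕ := Ultrafilter.of Filter.atTop

lemma corrU_le : (corrU : Filter ℕ) ≤ Filter.atTop := Ultrafilter.of_le _

/-- Upper density of visits to `C`, as an ultrafilter limit of empirical densities. -/
noncomputable def corrDens (C : Set (Γ → Bool)) : ℝ :=
  limUnder (corrU : Filter ℕ) (corrEmp Φ E C)

lemma corrDens_tendsto (C : Set (Γ → Bool)) :
    Tendsto (corrEmp Φ E C) (corrU : Filter ℕ) (𝓝 (corrDens Φ E C)) := by
  apply tendsto_nhds_limUnder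
  have hmem : ((corrU : Filter ℕ).map (corrEmp Φ E C)) ≤ 𝓟 (Set.Icc (0:ℝ) 1) := by
    rw [le_principal_iff, mem_map]
    exact univ_mem' (fun n => ⟨corrEmp_nonneg Φ E C n, corrEmp_le_one Φ E C n⟩)
  obtain ⟨x, -, hx⟩ := (isCompact_Icc (a := (0:ℝ)) (b := 1)).ultrafilter_le_nhds
    (corrU.map (corrEmp Φ E C)) (by rwa [Ultrafilter.coe_map])
  exact ⟨x, by rwa [Ultrafilter.coe_map] at hx⟩

lemma corrDens_eq {C : Set (Γ → Bool)} {L : ℝ}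
    (h : Tendsto (corrEmp Φ E C) (corrU : Filter ℕ) (𝓝 L)) : corrDens Φ E C = L :=
  tendsto_nhds_unique (corrDens_tendsto Φ E C) h

lemma corrDens_nonneg (C : Set (Γ → Bool)) : 0 ≤ corrDens Φ E C :=
  ge_of_tendsto' (corrDens_tendsto Φ E C) (corrEmp_nonneg Φ E C)

lemma corrDens_univ (hn : ∀ n, (Φ n).Nonempty) : corrDens Φ E Set.univ = 1 := by
  apply corrDens_eq
  have : corrEmp Φ E Set.univ = fun _ => (1:ℝ) := funext (corrEmp_univ Φ E hn)
  rw [this]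
  exact tendsto_const_nhds

lemma corrDens_mono {C D : Set (Γ → Bool)} (h : C ⊆ D) : corrDens Φ E C ≤ corrDens Φ E D :=
  le_of_tendsto_of_tendsto' (corrDens_tendsto Φ E C) (corrDens_tendsto Φ E D)
    (corrEmp_mono Φ E h)

lemma corrDens_union_le (C D : Set (Γ → Bool)) :
    corrDens Φ E (C ∪ D) ≤ corrDens Φ E C + corrDens Φ E D :=
  le_of_tendsto_of_tendsto' (corrDens_tendsto Φ E (C ∪ D))
    ((corrDens_tendsto Φ E C).add (corrDens_tendsto Φ E D))
    (corrEmp_union_le Φ E C D)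

lemma corrDens_union_disjoint {C D : Set (Γ → Bool)} (h : Disjoint C D) :
    corrDens Φ E (C ∪ D) = corrDens Φ E C + corrDens Φ E D := by
  apply corrDens_eq
  have heq : corrEmp Φ E (C ∪ D) = fun n => corrEmp Φ E C n + corrEmp Φ E D n :=
    funext (corrEmp_union_disjoint Φ E h)
  rw [heq]
  exact (corrDens_tendsto Φ E C).add (corrDens_tendsto Φ E D)

lemma corrDens_zero {C : Set (Γ → Bool)} (h : ∀ γ : Γ, corrOrb E γ ∉ C) :
    corrDens Φ E C = 0 := by
  apply corrDens_eq
  have heq : corrEmp Φ E C = fun _ => (0:ℝ) := funext (corrEmp_zero Φ E h)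
  rw [heq]
  exact tendsto_const_nhds

lemma corrDens_point {δ : ℝ}
    (hδ : Tendsto (fun n => ((E ∩ ↑(Φ n)).ncard : ℝ) / ((Φ n).card : ℝ)) atTop (𝓝 δ)) :
    corrDens Φ E {η : Γ → Bool | η 1 = true} = δ := by
  apply corrDens_eq
  have heq : corrEmp Φ E {η : Γ → Bool | η 1 = true}
      = fun n => ((E ∩ ↑(Φ n)).ncard : ℝ) / ((Φ n).card : ℝ) := funext (corrEmp_point Φ E)
  rw [heq]
  exact hδ.mono_left corrU_le

lemma corrDens_shift (hn : ∀ n, (Φ n).Nonempty)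
    (hF : ∀ γ : Γ, Tendsto
      (fun n => ((Φ n ∩ (Φ n).image (γ * ·)).card : ℝ) / ((Φ n).card : ℝ)) atTop (𝓝 1))
    (γ : Γ) (C : Set (Γ → Bool)) :
    corrDens Φ E ((fun ξ : Γ → Bool => fun p => ξ (p * γ)) ⁻¹' C) = corrDens Φ E C := by
  have hdiff : Tendsto (fun n => corrEmp Φ E ((fun ξ : Γ → Bool => fun p => ξ (p * γ)) ⁻¹' C) n
      - corrEmp Φ E C n) atTop (𝓝 0) := by
    apply squeeze_zero_norm
      (fun n => (corrEmp_shift Φ E γ C (hn n)).trans_eq rfl)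
    have : Tendsto (fun n => 1 -
        ((Φ n ∩ (Φ n).image (γ * ·)).card : ℝ) / ((Φ n).card : ℝ)) atTop (𝓝 (1 - 1)) :=
      tendsto_const_nhds.sub (hF γ)
    simpa using this
  have h1 : Tendsto (fun n => corrEmp Φ E ((fun ξ : Γ → Bool => fun p => ξ (p * γ)) ⁻¹' C) n
      - corrEmp Φ E C n) (corrU : Filter ℕ)
      (𝓝 (corrDens Φ E ((fun ξ : Γ → Bool => fun p => ξ (p * γ)) ⁻¹' C) - corrDens Φ E C)) :=
    (corrDens_tendsto Φ E _).sub (corrDens_tendsto Φ E C)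
  have h2 := tendsto_nhds_unique h1 (hdiff.mono_left corrU_le)
  linarith

end Dens

section Cont

variable {Γ : Type*} [Group Γ] [DecidableEq Γ]
variable (Φ : ℕ → Finset Γ) (E : Set Γ) [DecidablePred (· ∈ E)]

instance corrNonemptyClopen (K : TopologicalSpace.Compacts (Γ → Bool)) :
    Nonempty {C : Set (Γ → Bool) // IsClopen C ∧ (K : Set (Γ → Bool)) ⊆ C} :=
  ⟨⟨Set.univ, isClopen_univ, Set.subset_univ _⟩⟩

/-- The value of the content on a compact set: infimum of upper densities of clopen supersets. -/
noncomputable def corrLam (K : TopologicalSpace.Compacts (Γ → Bool)) : ℝ :=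
  ⨅ C : {C : Set (Γ → Bool) // IsClopen C ∧ (K : Set (Γ → Bool)) ⊆ C}, corrDens Φ E C.1

lemma corrLam_bddBelow (K : TopologicalSpace.Compacts (Γ → Bool)) :
    BddBelow (Set.range fun C : {C : Set (Γ → Bool) // IsClopen C ∧ (K : Set (Γ → Bool)) ⊆ C} =>
      corrDens Φ E C.1) := by
  refine ⟨0, ?_⟩
  rintro x ⟨C, rfl⟩
  exact corrDens_nonneg Φ E _

lemma corrLam_le {K : TopologicalSpace.Compacts (Γ → Bool)} {C : Set (Γ → Bool)}
    (hC : IsClopen C) (hKC : (K : Set (Γ → Bool)) ⊆ C) : corrLam Φ E K ≤ corrDens Φ E C :=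
  ciInf_le (corrLam_bddBelow Φ E K) ⟨C, hC, hKC⟩

lemma le_corrLam {K : TopologicalSpace.Compacts (Γ → Bool)} {r : ℝ}
    (h : ∀ C : Set (Γ → Bool), IsClopen C → (K : Set (Γ → Bool)) ⊆ C → r ≤ corrDens Φ E C) :
    r ≤ corrLam Φ E K :=
  le_ciInf fun C => h C.1 C.2.1 C.2.2

lemma corrLam_nonneg (K : TopologicalSpace.Compacts (Γ → Bool)) : 0 ≤ corrLam Φ E K :=
  le_corrLam Φ E fun C _ _ => corrDens_nonneg Φ E C

lemma corrLam_clopen {C : Set (Γ → Bool)} (hC : IsClopen C) :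
    corrLam Φ E ⟨C, hC.isClosed.isCompact⟩ = corrDens Φ E C := by
  refine le_antisymm (corrLam_le Φ E hC subset_rfl) ?_
  exact le_corrLam Φ E fun D hD hCD => corrDens_mono Φ E hCD

lemma corrLam_mono (K₁ K₂ : TopologicalSpace.Compacts (Γ → Bool))
    (h : (K₁ : Set (Γ → Bool)) ⊆ K₂) : corrLam Φ E K₁ ≤ corrLam Φ E K₂ :=
  le_corrLam Φ E fun C hC hKC => corrLam_le Φ E hC (h.trans hKC)

lemma corrLam_sup_le (K₁ K₂ : TopologicalSpace.Compacts (Γ → Bool)) :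
    corrLam Φ E (K₁ ⊔ K₂) ≤ corrLam Φ E K₁ + corrLam Φ E K₂ := by
  refine le_of_forall_pos_le_add ?_
  intro ε hε
  have h1 : corrLam Φ E K₁ < corrLam Φ E K₁ + ε / 2 := by linarith
  have h2 : corrLam Φ E K₂ < corrLam Φ E K₂ + ε / 2 := by linarith
  obtain ⟨⟨C₁, hC₁, hK₁⟩, hlt₁⟩ := exists_lt_of_ciInf_lt h1
  obtain ⟨⟨C₂, hC₂, hK₂⟩, hlt₂⟩ := exists_lt_of_ciInf_lt h2
  have hsub : ((K₁ ⊔ K₂ : TopologicalSpace.Compacts (Γ → Bool)) : Set (Γ → Bool)) ⊆ C₁ ∪ C₂ := by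
    rw [TopologicalSpace.Compacts.coe_sup]
    exact Set.union_subset_union hK₁ hK₂
  have := corrLam_le Φ E (hC₁.union hC₂) hsub
  have hle := corrDens_union_le Φ E C₁ C₂
  linarith

lemma corrLam_sup_disjoint (K₁ K₂ : TopologicalSpace.Compacts (Γ → Bool))
    (hdisj : Disjoint (K₁ : Set (Γ → Bool)) K₂) :
    corrLam Φ E (K₁ ⊔ K₂) = corrLam Φ E K₁ + corrLam Φ E K₂ := by
  refine le_antisymm (corrLam_sup_le Φ E K₁ K₂) ?_
  refine le_corrLam Φ E fun C hC hKC => ?_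
  rw [TopologicalSpace.Compacts.coe_sup] at hKC
  obtain ⟨B, hB, hK₁B, hBK₂⟩ := corr_exists_clopen_between K₁.2
    K₂.2.isClosed.isOpen_compl (Set.subset_compl_iff_disjoint_right.mpr hdisj)
  have hd1 : corrLam Φ E K₁ ≤ corrDens Φ E (C ∩ B) :=
    corrLam_le Φ E (hC.inter hB) (Set.subset_inter ((Set.subset_union_left).trans hKC) hK₁B)
  have hd2 : corrLam Φ E K₂ ≤ corrDens Φ E (C ∩ Bᶜ) := by
    refine corrLam_le Φ E (hC.inter hB.compl) (Set.subset_inter ((Set.subset_union_right).trans hKC) ?_)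
    intro x hx
    simp only [Set.mem_compl_iff]
    intro hxB
    exact (hBK₂ hxB) hx
  have hunion : (C ∩ B) ∪ (C ∩ Bᶜ) = C := by
    rw [← Set.inter_union_distrib_left, Set.union_compl_self, Set.inter_univ]
  have hdisj2 : Disjoint (C ∩ B) (C ∩ Bᶜ) :=
    Disjoint.mono Set.inter_subset_right Set.inter_subset_right disjoint_compl_right
  have hadd := corrDens_union_disjoint Φ E hdisj2
  rw [hunion] at hadd
  linarith

/-- The content on `Γ → Bool` given by upper densities along the Følner sequence. -/
noncomputable def corrContent : MeasureTheory.Content (Γ → Bool) where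
  toFun K := (corrLam Φ E K).toNNReal
  mono' K₁ K₂ h := Real.toNNReal_mono (corrLam_mono Φ E K₁ K₂ h)
  sup_disjoint' K₁ K₂ hdisj _ _ := by
    show (corrLam Φ E (K₁ ⊔ K₂)).toNNReal = _
    rw [corrLam_sup_disjoint Φ E K₁ K₂ hdisj,
      Real.toNNReal_add (corrLam_nonneg Φ E K₁) (corrLam_nonneg Φ E K₂)]
  sup_le' K₁ K₂ := by
    show (corrLam Φ E (K₁ ⊔ K₂)).toNNReal ≤ _
    rw [← Real.toNNReal_add (corrLam_nonneg Φ E K₁) (corrLam_nonneg Φ E K₂)]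
    exact Real.toNNReal_mono (corrLam_sup_le Φ E K₁ K₂)

end Cont

section Key

variable {Γ : Type*} [Group Γ] [Countable Γ] [DecidableEq Γ]

theorem corr_key (Φ : ℕ → Finset Γ) (hne : ∀ n, (Φ n).Nonempty)
    (hF : ∀ γ : Γ, Tendsto
      (fun n => ((Φ n ∩ (Φ n).image (γ * ·)).card : ℝ) / ((Φ n).card : ℝ)) atTop (𝓝 1))
    (E : Set Γ) [DecidablePred (· ∈ E)] (δ : ℝ)
    (hδ : Tendsto (fun n => ((E ∩ ↑(Φ n)).ncard : ℝ) / ((Φ n).card : ℝ)) atTop (𝓝 δ)) :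
    ∃ μ : Measure (Γ → Bool), IsProbabilityMeasure μ ∧
      μ (closure {ξ : Γ → Bool | ∃ γ : Γ, ξ = fun p => if p * γ ∈ E then true else false}) = 1 ∧
      (∀ γ : Γ, MeasurePreserving (fun ξ : Γ → Bool => fun p => ξ (p * γ)) μ μ) ∧
      (μ ({η : Γ → Bool | η 1 = true} ∩
        closure {ξ : Γ → Bool | ∃ γ : Γ, ξ = fun p => if p * γ ∈ E then true else false})).toReal
        = δ := by
  set S : Set (Γ → Bool) :=
    {ξ : Γ → Bool | ∃ γ : Γ, ξ = fun p => if p * γ ∈ E then true else false} with hS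
  set κ := corrContent Φ E with hκ
  set μm := κ.measure with hμm
  -- measure of clopen sets
  have hμ_clopen : ∀ C : Set (Γ → Bool), IsClopen C →
      μm C = ENNReal.ofReal (corrDens Φ E C) := by
    intro C hC
    rw [hμm, κ.measure_apply hC.isOpen.measurableSet,
      κ.outerMeasure_of_isOpen C hC.isOpen,
      κ.innerContent_of_isCompact hC.isClosed.isCompact hC.isOpen]
    show ((corrLam Φ E ⟨C, hC.isClosed.isCompact⟩).toNNReal : ENNReal) = _
    rw [corrLam_clopen Φ E hC]
    rfl
  -- probability measure
  have hprob : IsProbabilityMeasure μm := by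
    constructor
    rw [hμ_clopen Set.univ isClopen_univ, corrDens_univ Φ E hne, ENNReal.ofReal_one]
  -- the orbit closure has full measure
  have horb : ∀ γ : Γ, corrOrb E γ ∈ S := fun γ => ⟨γ, rfl⟩
  have hXnull : μm (closure S)ᶜ = 0 := by
    rw [hμm, κ.measure_apply isClosed_closure.measurableSet.compl,
      κ.outerMeasure_of_isOpen _ isClosed_closure.isOpen_compl]
    refine le_antisymm ?_ zero_le
    show (⨆ (K : TopologicalSpace.Compacts (Γ → Bool))
      (_ : (K : Set (Γ → Bool)) ⊆ (closure S)ᶜ), κ K) ≤ 0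
    refine iSup₂_le fun K hK => ?_
    obtain ⟨C, hC, hKC, hCX⟩ :=
      corr_exists_clopen_between K.2 isClosed_closure.isOpen_compl hK
    have h0 : corrDens Φ E C = 0 :=
      corrDens_zero Φ E (fun γ hγ => (hCX hγ) (subset_closure (horb γ)))
    have hle : corrLam Φ E K ≤ 0 := (corrLam_le Φ E hC hKC).trans_eq h0
    have : κ K = 0 := by
      show ((corrLam Φ E K).toNNReal : ENNReal) = 0
      rw [Real.toNNReal_of_nonpos hle]
      rfl
    exact this.le
  have hX1 : μm (closure S) = 1 := by
    have := measure_add_measure_compl (μ := μm) (s := closure S) isClosed_closure.measurableSet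
    rw [hXnull, add_zero] at this
    rw [this, measure_univ]
  -- invariance
  have hFcont : ∀ γ : Γ, Continuous (fun ξ : Γ → Bool => fun p => ξ (p * γ)) := by
    intro γ
    exact continuous_pi fun p => continuous_apply (p * γ)
  have hinv : ∀ γ : Γ, MeasurePreserving (fun ξ : Γ → Bool => fun p => ξ (p * γ)) μm μm := by
    intro γ
    refine ⟨(hFcont γ).measurable, ?_⟩
    have hgen : (inferInstance : MeasurableSpace (Γ → Bool))
        = MeasurableSpace.generateFrom {C : Set (Γ → Bool) | IsClopen C} :=
      (BorelSpace.measurable_eq).trans isTopologicalBasis_isClopen.borel_eq_generateFrom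
    haveI : IsProbabilityMeasure
        (Measure.map (fun ξ : Γ → Bool => fun p => ξ (p * γ)) μm) :=
      Measure.isProbabilityMeasure_map (hFcont γ).measurable.aemeasurable
    refine MeasureTheory.ext_of_generate_finite _ hgen
      (fun C hC D hD _ => hC.inter hD) ?_ ?_
    · intro C hC
      rw [Measure.map_apply (hFcont γ).measurable hC.isOpen.measurableSet]
      rw [hμ_clopen _ (hC.preimage (hFcont γ)), hμ_clopen C hC]
      rw [corrDens_shift Φ E hne hF γ C]
    · rw [Measure.map_apply (hFcont γ).measurable MeasurableSet.univ, Set.preimage_univ]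
  -- value at the cylinder set
  have hδ0 : 0 ≤ δ :=
    ge_of_tendsto' hδ (fun n => div_nonneg (Nat.cast_nonneg _) (Nat.cast_nonneg _))
  have hAclopen : IsClopen {η : Γ → Bool | η 1 = true} := by
    show IsClopen ((fun η : Γ → Bool => η 1) ⁻¹' {x | x = true})
    exact (isClopen_discrete _).preimage (continuous_apply 1)
  have hval : μm ({η : Γ → Bool | η 1 = true} ∩ closure S) = ENNReal.ofReal δ := by
    have h1 : μm ({η : Γ → Bool | η 1 = true} \ closure S) = 0 :=
      measure_mono_null (fun x hx => hx.2) hXnull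
    have h2 : μm ({η : Γ → Bool | η 1 = true} ∩ closure S)
        + μm ({η : Γ → Bool | η 1 = true} \ closure S) = μm {η : Γ → Bool | η 1 = true} :=
      measure_inter_add_diff _ isClosed_closure.measurableSet
    rw [h1, add_zero] at h2
    rw [h2, hμ_clopen _ hAclopen, corrDens_point Φ E hδ]
  exact ⟨μm, hprob, hX1, hinv, by rw [hval, ENNReal.toReal_ofReal hδ0]⟩

end Key

/-- Proposition 5.1, correspondence principle. Let `G` be a countable
group, `Φ` a left Følner sequence in `G × G`, `E ⊆ G × G`, and `Ω = {0,1}^{G×G}` with the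
shift actions `(T_g ξ)(g₁,g₂) = ξ(g₁g, g₂)` and `(S_g ξ)(g₁,g₂) = ξ(g₁, g₂g)`. If the
upper density `d̄(E) = limsup |E ∩ Φₙ|/|Φₙ| = δ > 0`, then there is a `T`- and
`S`-invariant Borel probability measure `μ` concentrated on the orbit closure
`X = cl{T_g S_h 1_E}` with `μ({η ∈ X : η(e,e) = 1}) = δ`. -/
theorem correspondence_principle
    {G : Type*} [Group G] [Countable G] [DecidableEq G]
    (Φ : ℕ → Finset (G × G)) (hΦ : IsLeftFolner Φ)
    (E : Set (G × G)) [DecidablePred (· ∈ E)] (δ : ℝ)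
    (hδ : Filter.limsup
        (fun n => ((E ∩ ↑(Φ n)).ncard : ℝ) / ((Φ n).card : ℝ)) Filter.atTop = δ)
    (hδpos : 0 < δ) :
    ∃ μ : Measure ((G × G) → Bool), IsProbabilityMeasure μ ∧
      μ (closure {ξ : (G × G) → Bool | ∃ g h : G,
        ξ = fun p => if (p.1 * g, p.2 * h) ∈ E then true else false}) = 1 ∧
      (∀ g : G,
        MeasurePreserving (fun ξ : (G × G) → Bool => fun p => ξ (p.1 * g, p.2)) μ μ) ∧
      (∀ g : G,
        MeasurePreserving (fun ξ : (G × G) → Bool => fun p => ξ (p.1, p.2 * g)) μ μ) ∧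
      (μ ({η : (G × G) → Bool | η (1, 1) = true} ∩
        closure {ξ : (G × G) → Bool | ∃ g h : G,
          ξ = fun p => if (p.1 * g, p.2 * h) ∈ E then true else false})).toReal = δ := by
  -- extract a subsequence along which the density converges to `δ`
  have h0 : ∀ n, 0 ≤ ((E ∩ ↑(Φ n)).ncard : ℝ) / ((Φ n).card : ℝ) :=
    fun n => div_nonneg (Nat.cast_nonneg _) (Nat.cast_nonneg _)
  have h1 : ∀ n, ((E ∩ ↑(Φ n)).ncard : ℝ) / ((Φ n).card : ℝ) ≤ 1 := by
    intro n
    refine div_le_one_of_le₀ ?_ (Nat.cast_nonneg _)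
    refine Nat.cast_le.mpr ?_
    calc (E ∩ ↑(Φ n)).ncard ≤ (↑(Φ n) : Set (G × G)).ncard :=
          Set.ncard_le_ncard Set.inter_subset_right (Φ n).finite_toSet
      _ = (Φ n).card := Set.ncard_coe_finset _
  obtain ⟨φ, hφ, htend⟩ := corr_exists_subseq_tendsto _ h0 h1 δ hδ
  obtain ⟨μ, hprob, hclos, hinv, hvalue⟩ := corr_key (fun n => Φ (φ n))
    (fun n => hΦ.1 (φ n)) (fun γ => (hΦ.2 γ).comp hφ.tendsto_atTop) E δ htend
  -- identify the orbit sets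
  have hSeq : {ξ : (G × G) → Bool | ∃ γ : G × G, ξ = fun p => if p * γ ∈ E then true else false}
      = {ξ : (G × G) → Bool | ∃ g h : G,
          ξ = fun p => if (p.1 * g, p.2 * h) ∈ E then true else false} := by
    ext ξ
    constructor
    · rintro ⟨γ, rfl⟩
      exact ⟨γ.1, γ.2, rfl⟩
    · rintro ⟨g, h, rfl⟩
      exact ⟨(g, h), rfl⟩
  rw [hSeq] at hclos hvalue
  refine ⟨μ, hprob, hclos, ?_, ?_, hvalue⟩
  · intro g
    have heq : (fun ξ : (G × G) → Bool => fun p => ξ (p.1 * g, p.2))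
        = fun ξ : (G × G) → Bool => fun p => ξ (p * ((g, 1) : G × G)) := by
      funext ξ p
      congr 1
      exact Prod.ext rfl (mul_one p.2).symm
    rw [heq]
    exact hinv ((g, 1) : G × G)
  · intro g
    have heq : (fun ξ : (G × G) → Bool => fun p => ξ (p.1, p.2 * g))
        = fun ξ : (G × G) → Bool => fun p => ξ (p * ((1, g) : G × G)) := by
      funext ξ p
      congr 1
      exact Prod.ext (mul_one p.1).symm rfl
    rw [heq]
    exact hinv ((1, g) : G × G)
end
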